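/- arXiv:1403.3106 — 3 statements merged into one kernel-verified Lean document; each statement's English description precedes it below -/
import Mathlib

section
/- Let d be a metrically proper compatible left-invariant metric on a metrisable topological group G. The following are equivalent: (1) d is maximal; (2) (G,d) is large scale geodesic; (3) there is ε > 0 so that the ball B_ε = {g ∈ G : d(g,1) ≤ ε} generates G and d is quasi-isometric to the word metric ρ_{B_ε}. -/
open Filter Topology
open scoped Pointwise

/-- A (plain) metric given as a distance function. -/
def IsMetric {G : Type*} (d : G → G → ℝ) : Prop :=
  (∀ x y, d x y = 0 ↔ x = y) ∧ (∀ x y, d x y = d y x) ∧ ∀ x y z, d x z ≤ d x y + d y z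

/-- The metric `d` induces the topology of `G`. -/
def IsCompatible (G : Type*) [TopologicalSpace G] (d : G → G → ℝ) : Prop :=
  ∀ (x : G) (s : Set G), s ∈ nhds x ↔ ∃ ε > (0 : ℝ), {y : G | d x y < ε} ⊆ s

/-- A compatible left-invariant metric on a topological group. -/
def IsCompatibleLeftInvariantMetric (G : Type*) [Group G] [TopologicalSpace G]
    (d : G → G → ℝ) : Prop :=
  IsMetric d ∧ IsCompatible G d ∧ ∀ h g f : G, d (h * g) (h * f) = d g f

/-- A set has finite diameter with respect to `d`. -/
def FiniteDiam {G : Type*} (d : G → G → ℝ) (A : Set G) : Prop :=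
  ∃ C : ℝ, ∀ x ∈ A, ∀ y ∈ A, d x y ≤ C

/-- `A` has property (OB) relative to `G`: finite diameter for every compatible
left-invariant metric. -/
def HasRelPropOB (G : Type*) [Group G] [TopologicalSpace G] (A : Set G) : Prop :=
  ∀ d : G → G → ℝ, IsCompatibleLeftInvariantMetric G d → FiniteDiam d A

/-- A sequence tends to infinity in `G` if some compatible left-invariant metric
witnesses `d (g n) 1 → ∞`. -/
def TendsToInfinity (G : Type*) [Group G] [TopologicalSpace G] (g : ℕ → G) : Prop :=
  ∃ d : G → G → ℝ, IsCompatibleLeftInvariantMetric G d ∧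
    Filter.Tendsto (fun n => d (g n) 1) Filter.atTop Filter.atTop

/-- A compatible left-invariant metric is metrically proper if `d (g n) 1 → ∞`
whenever `g n → ∞`. -/
def MetricallyProperMetric (G : Type*) [Group G] [TopologicalSpace G]
    (d : G → G → ℝ) : Prop :=
  ∀ g : ℕ → G, TendsToInfinity G g →
    Filter.Tendsto (fun n => d (g n) 1) Filter.atTop Filter.atTop

/-- The word metric (with values in `ℝ`) associated to a symmetric generating set `S`. -/
noncomputable def wordMetric {G : Type*} [Group G] (S : Set G) (f h : G) : ℝ :=
  sInf {r : ℝ | ∃ l : List G, (∀ x ∈ l, x ∈ S) ∧ f = h * l.prod ∧ r = l.length}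

set_option linter.unusedSectionVars false

section Basics
variable {G : Type*} [Group G] [TopologicalSpace G]

lemma IsMetric.self {d : G → G → ℝ} (h : IsMetric d) (x : G) : d x x = 0 :=
  (h.1 x x).2 rfl

lemma IsMetric.nonneg {d : G → G → ℝ} (h : IsMetric d) (x y : G) : 0 ≤ d x y := by
  have := h.2.2 x y x
  rw [h.self x, h.2.1 y x] at this
  linarith

lemma clim_metric {d : G → G → ℝ} (hd : IsCompatibleLeftInvariantMetric G d) : IsMetric d := hd.1

lemma d_shift {d : G → G → ℝ} (hd : IsCompatibleLeftInvariantMetric G d) (g f : G) :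
    d g f = d (f⁻¹ * g) 1 := by
  have := hd.2.2 f⁻¹ g f
  rw [inv_mul_cancel] at this
  exact this.symm

lemma d_inv_one {d : G → G → ℝ} (hd : IsCompatibleLeftInvariantMetric G d) (u : G) :
    d u⁻¹ 1 = d u 1 := by
  have h1 := hd.2.2 u u⁻¹ 1
  rw [mul_inv_cancel, mul_one] at h1
  rw [← h1]; exact hd.1.2.1 1 u

lemma d_mul_right {d : G → G → ℝ} (hd : IsCompatibleLeftInvariantMetric G d) (x s : G) :
    d x (x * s) = d s 1 := by
  have := hd.2.2 x 1 s
  rw [mul_one] at this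
  rw [this]; exact hd.1.2.1 1 s

end Basics

section WordMetric
variable {G : Type*} [Group G] [TopologicalSpace G] {S : Set G}

lemma exists_word (hgen : Subgroup.closure S = ⊤) (hsym : ∀ u ∈ S, u⁻¹ ∈ S) (g f : G) :
    ∃ l : List G, (∀ x ∈ l, x ∈ S) ∧ g = f * l.prod := by
  have hx : f⁻¹ * g ∈ Subgroup.closure S := by rw [hgen]; trivial
  have hx2 : f⁻¹ * g ∈ (Subgroup.closure S).toSubmonoid := hx
  rw [Subgroup.closure_toSubmonoid] at hx2
  obtain ⟨l, hl, hp⟩ := Submonoid.exists_list_of_mem_closure hx2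
  refine ⟨l, fun x hxl => ?_, by rw [hp, mul_inv_cancel_left]⟩
  rcases hl x hxl with h | h
  · exact h
  · have : x⁻¹ ∈ S := Set.mem_inv.mp h
    simpa using hsym _ this

lemma wm_bddBelow (g f : G) : BddBelow
    {r : ℝ | ∃ l : List G, (∀ x ∈ l, x ∈ S) ∧ g = f * l.prod ∧ r = l.length} := by
  refine ⟨0, ?_⟩
  rintro r ⟨l, -, -, rfl⟩
  positivity

lemma wm_nonneg (g f : G) : 0 ≤ wordMetric S g f := by
  apply Real.sInf_nonneg
  rintro r ⟨l, -, -, rfl⟩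
  positivity

lemma wm_le {g f : G} {l : List G} (hl : ∀ x ∈ l, x ∈ S) (hp : g = f * l.prod) :
    wordMetric S g f ≤ l.length :=
  csInf_le (wm_bddBelow g f) ⟨l, hl, hp, rfl⟩

lemma wm_spec (hgen : Subgroup.closure S = ⊤) (hsym : ∀ u ∈ S, u⁻¹ ∈ S) (g f : G) :
    ∃ l : List G, (∀ x ∈ l, x ∈ S) ∧ g = f * l.prod ∧ wordMetric S g f = l.length := by
  classical
  set T : Set ℕ := {k : ℕ | ∃ l : List G, (∀ x ∈ l, x ∈ S) ∧ g = f * l.prod ∧ l.length = k}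
    with hT
  have hne : T.Nonempty := by
    obtain ⟨l, h1, h2⟩ := exists_word hgen hsym g f
    exact ⟨l.length, l, h1, h2, rfl⟩
  obtain ⟨l, hl1, hl2, hl3⟩ : sInf T ∈ T := Nat.sInf_mem hne
  refine ⟨l, hl1, hl2, le_antisymm (wm_le hl1 hl2) ?_⟩
  refine le_csInf ⟨(l.length : ℝ), ⟨l, hl1, hl2, rfl⟩⟩ ?_
  rintro r ⟨l', h1', h2', rfl⟩
  have h4 : sInf T ≤ l'.length := Nat.sInf_le ⟨l', h1', h2', rfl⟩
  rw [← hl3] at h4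
  exact_mod_cast h4

lemma wm_inv_one (hgen : Subgroup.closure S = ⊤) (hsym : ∀ u ∈ S, u⁻¹ ∈ S) (u : G) :
    wordMetric S u⁻¹ 1 = wordMetric S u 1 := by
  have key : ∀ v : G, wordMetric S v⁻¹ 1 ≤ wordMetric S v 1 := by
    intro v
    obtain ⟨l, h1, h2, h3⟩ := wm_spec hgen hsym v 1
    have hp : v⁻¹ = 1 * ((l.map fun x => x⁻¹).reverse).prod := by
      rw [one_mul, ← List.prod_inv_reverse, h2, one_mul]
    have hmem : ∀ x ∈ (l.map fun y => y⁻¹).reverse, x ∈ S := by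
      intro x hx
      rw [List.mem_reverse, List.mem_map] at hx
      obtain ⟨y, hy, rfl⟩ := hx
      exact hsym y (h1 y hy)
    calc wordMetric S v⁻¹ 1 ≤ ((l.map fun y => y⁻¹).reverse).length := wm_le hmem hp
      _ = l.length := by simp
      _ = wordMetric S v 1 := h3.symm
  refine le_antisymm (key u) ?_
  have := key u⁻¹
  rwa [inv_inv] at this

lemma wm_triangle (hgen : Subgroup.closure S = ⊤) (hsym : ∀ u ∈ S, u⁻¹ ∈ S) (g h f : G) :
    wordMetric S g f ≤ wordMetric S g h + wordMetric S h f := by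
  obtain ⟨l1, h11, h12, h13⟩ := wm_spec hgen hsym g h
  obtain ⟨l2, h21, h22, h23⟩ := wm_spec hgen hsym h f
  have hp : g = f * (l2 ++ l1).prod := by
    rw [List.prod_append, ← mul_assoc, ← h22, ← h12]
  calc wordMetric S g f ≤ ((l2 ++ l1).length : ℝ) := wm_le (by
        intro x hx
        rcases List.mem_append.mp hx with h | h
        · exact h21 x h
        · exact h11 x h) hp
    _ = (l1.length : ℝ) + l2.length := by simp [add_comm]
    _ = _ := by rw [← h13, ← h23]

end WordMetric

section Chains
variable {G : Type*} [Group G] [TopologicalSpace G] {d : G → G → ℝ}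

/-- Sum of step weights dominates distance. -/
lemma d_le_listsum (hd : IsCompatibleLeftInvariantMetric G d) {w : G → ℝ}
    (hw : ∀ s, d s 1 ≤ w s) : ∀ (l : List G) (f : G), d (f * l.prod) f ≤ (l.map w).sum := by
  intro l
  induction l with
  | nil => intro f; simp [hd.1.self]
  | cons s t ih =>
    intro f
    have h1 : d (f * (s :: t).prod) f ≤ d (f * s * t.prod) (f * s) + d (f * s) f := by
      have := hd.1.2.2 (f * (s :: t).prod) (f * s) f
      simpa [List.prod_cons, mul_assoc] using this
    have h2 := ih (f * s)
    have h3 : d (f * s) f = d s 1 := by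
      have := hd.2.2 f s 1
      rw [mul_one] at this
      exact this
    calc d (f * (s :: t).prod) f ≤ d (f * s * t.prod) (f * s) + d (f * s) f := h1
      _ ≤ (t.map w).sum + w s := add_le_add h2 (h3 ▸ hw s)
      _ = ((s :: t).map w).sum := by simp [add_comm]

lemma d_le_len (hd : IsCompatibleLeftInvariantMetric G d) {ε : ℝ} :
    ∀ (l : List G) (f : G), (∀ s ∈ l, d s 1 ≤ ε) → d (f * l.prod) f ≤ ε * l.length := by
  intro l
  induction l with
  | nil => intro f _; simp [hd.1.self]
  | cons s t ih =>
    intro f hmem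
    have h1 : d (f * (s :: t).prod) f ≤ d (f * s * t.prod) (f * s) + d (f * s) f := by
      have := hd.1.2.2 (f * (s :: t).prod) (f * s) f
      simpa [List.prod_cons, mul_assoc] using this
    have h2 := ih (f * s) (fun u hu => hmem u (List.mem_cons_of_mem s hu))
    have h3 : d (f * s) f = d s 1 := by
      have := hd.2.2 f s 1
      rw [mul_one] at this
      exact this
    have h4 : d s 1 ≤ ε := hmem s List.mem_cons_self
    calc d (f * (s :: t).prod) f ≤ d (f * s * t.prod) (f * s) + d (f * s) f := h1
      _ ≤ ε * t.length + ε := by rw [h3]; exact add_le_add h2 h4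
      _ = ε * (s :: t).length := by push_cast [List.length_cons]; ring

/-- distance from g to f is at most ε times the word metric. -/
lemma d_le_eps_wm (hd : IsCompatibleLeftInvariantMetric G d) {S : Set G} {ε : ℝ}
    (hgen : Subgroup.closure S = ⊤) (hsym : ∀ u ∈ S, u⁻¹ ∈ S)
    (hS : ∀ u ∈ S, d u 1 ≤ ε) (g f : G) : d g f ≤ ε * wordMetric S g f := by
  obtain ⟨l, h1, h2, h3⟩ := wm_spec hgen hsym g f
  rw [h3, h2]
  exact d_le_len hd l f (fun s hs => hS s (h1 s hs))

lemma wm_le_one (hd : IsCompatibleLeftInvariantMetric G d) {ε : ℝ} {g f : G}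
    (h : d g f ≤ ε) : wordMetric {u : G | d u 1 ≤ ε} g f ≤ 1 := by
  have hmem : ∀ x ∈ [f⁻¹ * g], x ∈ {u : G | d u 1 ≤ ε} := by
    intro x hx
    rw [List.mem_singleton] at hx
    subst hx
    show d (f⁻¹ * g) 1 ≤ ε
    rw [← d_shift hd]
    exact h
  have := wm_le hmem (by simp : g = f * ([f⁻¹ * g]).prod)
  simpa using this

/-- triangle inequality along a chain. -/
lemma d_le_chain_sum (hd : IsCompatibleLeftInvariantMetric G d) (z : ℕ → G) :
    ∀ n, d (z 0) (z n) ≤ ∑ i ∈ Finset.range n, d (z i) (z (i + 1)) := by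
  intro n
  induction n with
  | zero => simp [hd.1.self]
  | succ n ih =>
    rw [Finset.sum_range_succ]
    calc d (z 0) (z (n + 1)) ≤ d (z 0) (z n) + d (z n) (z (n + 1)) := hd.1.2.2 _ _ _
      _ ≤ _ := by linarith

lemma chain_mem_closure (hd : IsCompatibleLeftInvariantMetric G d) {K : ℝ} (z : ℕ → G) :
    ∀ n, (∀ i < n, d (z i) (z (i + 1)) ≤ K) →
      (z 0)⁻¹ * z n ∈ Subgroup.closure {u : G | d u 1 ≤ K} := by
  intro n
  induction n with
  | zero => intro _; simp
  | succ n ih =>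
    intro hz
    have h1 : (z 0)⁻¹ * z (n + 1) = ((z 0)⁻¹ * z n) * ((z n)⁻¹ * z (n + 1)) := by group
    rw [h1]
    refine mul_mem (ih fun i hi => hz i (hi.trans (Nat.lt_succ_self n))) ?_
    apply Subgroup.subset_closure
    show d ((z n)⁻¹ * z (n + 1)) 1 ≤ K
    rw [← d_shift hd]
    rw [hd.1.2.1]
    exact hz n (Nat.lt_succ_self n)

end Chains

section Anchor
variable {G : Type*} [Group G] [TopologicalSpace G] {d : G → G → ℝ}

lemma anchor (hd : IsCompatibleLeftInvariantMetric G d) {K : ℝ} (hK : 0 < K)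
    (hgen : Subgroup.closure {u : G | d u 1 ≤ 2 * K} = ⊤) :
    ∀ n : ℕ, ∀ z : ℕ → G, (∀ i < n, d (z i) (z (i + 1)) ≤ K) →
      wordMetric {u : G | d u 1 ≤ 2 * K} (z n) (z 0) ≤
        (1 / K) * (∑ i ∈ Finset.range n, d (z i) (z (i + 1))) + 1 := by
  classical
  have hsym : ∀ u ∈ {u : G | d u 1 ≤ 2 * K}, u⁻¹ ∈ {u : G | d u 1 ≤ 2 * K} := by
    intro u hu
    show d u⁻¹ 1 ≤ 2 * K
    rw [d_inv_one hd]
    exact hu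
  intro n
  induction n using Nat.strong_induction_on with
  | _ n ih =>
    intro z hz
    have hsum_nonneg : (0 : ℝ) ≤ ∑ i ∈ Finset.range n, d (z i) (z (i + 1)) :=
      Finset.sum_nonneg fun i _ => hd.1.nonneg _ _
    by_cases hcase : ∃ i, i ≤ n ∧ K < d (z 0) (z i)
    · -- let j be the least such index
      set j := Nat.find hcase with hj
      obtain ⟨hjn, hjd⟩ := Nat.find_spec hcase
      rw [← hj] at hjn hjd
      have hj1 : 1 ≤ j := by
        rcases Nat.eq_zero_or_pos j with h0 | h0
        · exfalso
          rw [h0] at hjd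
          rw [hd.1.self] at hjd
          linarith
        · exact h0
      have hprev : d (z 0) (z (j - 1)) ≤ K := by
        have := Nat.find_min hcase (m := j - 1) (by omega)
        push_neg at this
        exact this (by omega)
      have hstep : d (z (j - 1)) (z j) ≤ K := by
        have := hz (j - 1) (by omega)
        have hj' : j - 1 + 1 = j := by omega
        rwa [hj'] at this
      have hdj : d (z 0) (z j) ≤ 2 * K := by
        have h1 : d (z 0) (z j) ≤ d (z 0) (z (j - 1)) + d (z (j - 1)) (z j) := by
          have := hd.1.2.2 (z 0) (z (j - 1)) (z j)
          exact this
        linarith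
      -- the tail chain
      set m := n - j with hm
      have hmn : m < n := by omega
      have hjm : j + m = n := by omega
      set w : ℕ → G := fun i => z (j + i) with hw
      have hwsteps : ∀ i < m, d (w i) (w (i + 1)) ≤ K := by
        intro i hi
        have := hz (j + i) (by omega)
        simpa [hw, Nat.add_assoc] using this
      have hIH := ih m hmn w hwsteps
      have hw0 : w 0 = z j := by simp [hw]
      have hwm : w m = z n := by simp [hw, hjm]
      -- word metric triangle
      have htri : wordMetric {u : G | d u 1 ≤ 2 * K} (z n) (z 0) ≤
          wordMetric {u : G | d u 1 ≤ 2 * K} (z n) (z j) +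
          wordMetric {u : G | d u 1 ≤ 2 * K} (z j) (z 0) :=
        wm_triangle hgen hsym _ _ _
      have hone : wordMetric {u : G | d u 1 ≤ 2 * K} (z j) (z 0) ≤ 1 := by
        apply wm_le_one hd
        rw [hd.1.2.1]
        exact hdj
      -- sum splitting
      have hsplit : ∑ i ∈ Finset.range n, d (z i) (z (i + 1)) =
          (∑ i ∈ Finset.range j, d (z i) (z (i + 1))) +
          ∑ i ∈ Finset.range m, d (w i) (w (i + 1)) := by
        rw [← hjm, Finset.sum_range_add]
        simp only [hw, Nat.add_assoc]
      have hfirst : K < ∑ i ∈ Finset.range j, d (z i) (z (i + 1)) :=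
        lt_of_lt_of_le hjd (d_le_chain_sum hd z j)
      have h1K : (0 : ℝ) < 1 / K := by positivity
      have hKle : 1 ≤ (1 / K) * ∑ i ∈ Finset.range j, d (z i) (z (i + 1)) := by
        have h2 : (1 / K) * K ≤ (1 / K) * ∑ i ∈ Finset.range j, d (z i) (z (i + 1)) :=
          mul_le_mul_of_nonneg_left (le_of_lt hfirst) (le_of_lt h1K)
        rw [one_div_mul_cancel (ne_of_gt hK)] at h2
        exact h2
      have hIH' : wordMetric {u : G | d u 1 ≤ 2 * K} (z n) (z j) ≤
          (1 / K) * (∑ i ∈ Finset.range m, d (w i) (w (i + 1))) + 1 := by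
        rw [← hw0, ← hwm]
        exact hIH
      rw [hsplit]
      rw [mul_add]
      linarith
    · -- all points within K of z 0
      push_neg at hcase
      have h1 : wordMetric {u : G | d u 1 ≤ 2 * K} (z n) (z 0) ≤ 1 := by
        apply wm_le_one hd
        rw [hd.1.2.1]
        have := hcase n le_rfl
        linarith
      have h2 : 0 ≤ (1 / K) * ∑ i ∈ Finset.range n, d (z i) (z (i + 1)) := by positivity
      linarith

end Anchor

section ChainMetric
variable {G : Type*} [Group G] [TopologicalSpace G]

/-- The chain (largest-path) metric associated to a weight `Λ` on increments. -/
noncomputable def chainMet (Λ : G → ℝ) (g f : G) : ℝ :=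
  sInf {r : ℝ | ∃ l : List G, g = f * l.prod ∧ r = (l.map Λ).sum}

variable {d : G → G → ℝ} {Λ : G → ℝ} {δ : ℝ}

lemma cm_nonempty (Λ : G → ℝ) (g f : G) :
    {r : ℝ | ∃ l : List G, g = f * l.prod ∧ r = (l.map Λ).sum}.Nonempty :=
  ⟨Λ (f⁻¹ * g), [f⁻¹ * g], by simp, by simp⟩

lemma cm_bdd (hd : IsCompatibleLeftInvariantMetric G d) (h1 : ∀ s, d s 1 ≤ Λ s) (g f : G) :
    BddBelow {r : ℝ | ∃ l : List G, g = f * l.prod ∧ r = (l.map Λ).sum} := by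
  refine ⟨0, ?_⟩
  rintro r ⟨l, hl, rfl⟩
  apply List.sum_nonneg
  intro x hx
  rw [List.mem_map] at hx
  obtain ⟨s, hs, rfl⟩ := hx
  exact le_trans (hd.1.nonneg s 1) (h1 s)

lemma cm_le_list (hd : IsCompatibleLeftInvariantMetric G d) (h1 : ∀ s, d s 1 ≤ Λ s)
    {g f : G} {l : List G} (hl : g = f * l.prod) : chainMet Λ g f ≤ (l.map Λ).sum :=
  csInf_le (cm_bdd hd h1 g f) ⟨l, hl, rfl⟩

lemma d_le_cm (hd : IsCompatibleLeftInvariantMetric G d) (h1 : ∀ s, d s 1 ≤ Λ s) (g f : G) :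
    d g f ≤ chainMet Λ g f := by
  apply le_csInf (cm_nonempty Λ g f)
  rintro r ⟨l, hl, rfl⟩
  rw [hl]
  exact d_le_listsum hd h1 l f

lemma cm_le_d (hd : IsCompatibleLeftInvariantMetric G d) (h1 : ∀ s, d s 1 ≤ Λ s)
    (h3 : ∀ s, d s 1 ≤ δ → Λ s = d s 1) {g f : G} (hsmall : d g f ≤ δ) :
    chainMet Λ g f ≤ d g f := by
  have hp : g = f * ([f⁻¹ * g]).prod := by simp
  have hshift : d (f⁻¹ * g) 1 = d g f := (d_shift hd g f).symm
  calc chainMet Λ g f ≤ (([f⁻¹ * g]).map Λ).sum := cm_le_list hd h1 hp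
    _ = Λ (f⁻¹ * g) := by simp
    _ = d (f⁻¹ * g) 1 := h3 _ (by rw [hshift]; exact hsmall)
    _ = d g f := hshift

lemma cm_symm_le (hd : IsCompatibleLeftInvariantMetric G d) (h1 : ∀ s, d s 1 ≤ Λ s)
    (h2 : ∀ s, Λ s⁻¹ = Λ s) (g f : G) : chainMet Λ g f ≤ chainMet Λ f g := by
  apply le_csInf (cm_nonempty Λ f g)
  rintro r ⟨l, hl, rfl⟩
  have hp : g = f * ((l.map fun x => x⁻¹).reverse).prod := by
    rw [← List.prod_inv_reverse, hl]
    group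
  have hsum : (((l.map fun x => x⁻¹).reverse).map Λ).sum = (l.map Λ).sum := by
    have e1 : ((l.map fun x => x⁻¹).reverse).map Λ = (l.map fun x => Λ x⁻¹).reverse := by
      rw [← List.map_reverse, List.map_map, List.map_reverse]
      rfl
    rw [e1, List.sum_reverse]
    congr 1
    apply List.map_congr_left
    intro s _
    exact h2 s
  calc chainMet Λ g f ≤ (((l.map fun x => x⁻¹).reverse).map Λ).sum := cm_le_list hd h1 hp
    _ = (l.map Λ).sum := hsum

lemma cm_triangle (hd : IsCompatibleLeftInvariantMetric G d) (h1 : ∀ s, d s 1 ≤ Λ s)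
    (g h f : G) : chainMet Λ g f ≤ chainMet Λ g h + chainMet Λ h f := by
  have concat : ∀ r ∈ {r : ℝ | ∃ l : List G, g = h * l.prod ∧ r = (l.map Λ).sum},
      ∀ s ∈ {r : ℝ | ∃ l : List G, h = f * l.prod ∧ r = (l.map Λ).sum},
      chainMet Λ g f ≤ r + s := by
    rintro r ⟨l1, hl1, rfl⟩ s ⟨l2, hl2, rfl⟩
    have hp : g = f * (l2 ++ l1).prod := by
      rw [List.prod_append, ← mul_assoc, ← hl2, ← hl1]
    calc chainMet Λ g f ≤ ((l2 ++ l1).map Λ).sum := cm_le_list hd h1 hp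
      _ = (l1.map Λ).sum + (l2.map Λ).sum := by simp [add_comm]
  have A : ∀ r ∈ {r : ℝ | ∃ l : List G, g = h * l.prod ∧ r = (l.map Λ).sum},
      chainMet Λ g f - r ≤ chainMet Λ h f := by
    intro r hr
    apply le_csInf (cm_nonempty Λ h f)
    intro s hs
    linarith [concat r hr s hs]
  have B : chainMet Λ g f - chainMet Λ h f ≤ chainMet Λ g h := by
    apply le_csInf (cm_nonempty Λ g h)
    intro r hr
    linarith [A r hr]
  linarith

lemma cm_left_inv (Λ : G → ℝ) (h g f : G) :
    chainMet Λ (h * g) (h * f) = chainMet Λ g f := by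
  unfold chainMet
  congr 1
  ext r
  constructor
  · rintro ⟨l, hl, rfl⟩
    refine ⟨l, ?_, rfl⟩
    rw [mul_assoc] at hl
    exact mul_left_cancel hl
  · rintro ⟨l, hl, rfl⟩
    exact ⟨l, by rw [mul_assoc, ← hl], rfl⟩

lemma cm_clim (hd : IsCompatibleLeftInvariantMetric G d) (hδ : 0 < δ)
    (h1 : ∀ s, d s 1 ≤ Λ s) (h2 : ∀ s, Λ s⁻¹ = Λ s)
    (h3 : ∀ s, d s 1 ≤ δ → Λ s = d s 1) :
    IsCompatibleLeftInvariantMetric G (chainMet Λ) := by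
  have hself : ∀ g : G, chainMet Λ g g = 0 := by
    intro g
    have hle : chainMet Λ g g ≤ 0 := by
      have := cm_le_list hd h1 (l := []) (g := g) (f := g) (by simp)
      simpa using this
    have hge := le_trans (by rw [hd.1.self]) (d_le_cm hd h1 g g)
    exact le_antisymm hle hge
  refine ⟨⟨?_, ?_, fun x y z => cm_triangle hd h1 x y z⟩, ?_, fun h g f => cm_left_inv Λ h g f⟩
  · intro x y
    constructor
    · intro h0
      have := d_le_cm hd h1 x y
      rw [h0] at this
      exact (hd.1.1 x y).mp (le_antisymm this (hd.1.nonneg x y))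
    · rintro rfl
      exact hself x
  · intro x y
    exact le_antisymm (cm_symm_le hd h1 h2 x y) (cm_symm_le hd h1 h2 y x)
  · intro x s
    constructor
    · intro hs
      obtain ⟨ε, hε, hball⟩ := (hd.2.1 x s).mp hs
      exact ⟨ε, hε, fun y hy => hball (lt_of_le_of_lt (d_le_cm hd h1 x y) hy)⟩
    · rintro ⟨ε, hε, hball⟩
      have hmem : {y : G | d x y < min ε δ} ∈ nhds x :=
        (hd.2.1 x _).mpr ⟨min ε δ, lt_min hε hδ, subset_rfl⟩
      apply Filter.mem_of_superset hmem
      intro y hy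
      apply hball
      show chainMet Λ x y < ε
      have hdxy : d x y ≤ δ := le_of_lt (lt_of_lt_of_le hy (min_le_right _ _))
      exact lt_of_le_of_lt (cm_le_d hd h1 h3 hdxy)
        (lt_of_lt_of_le hy (min_le_left _ _))

end ChainMetric

section OB
variable {G : Type*} [Group G] [TopologicalSpace G] {d : G → G → ℝ}

lemma sum_clim (hd : IsCompatibleLeftInvariantMetric G d) {e : G → G → ℝ}
    (he : IsCompatibleLeftInvariantMetric G e) :
    IsCompatibleLeftInvariantMetric G (fun a b => d a b + e a b) := by
  refine ⟨⟨?_, ?_, ?_⟩, ?_, ?_⟩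
  · intro x y
    constructor
    · intro h0
      dsimp only at h0
      have h1 := hd.1.nonneg x y
      have h2 := he.1.nonneg x y
      exact (hd.1.1 x y).mp (by linarith)
    · rintro rfl
      show d x x + e x x = 0
      rw [hd.1.self, he.1.self, add_zero]
  · intro x y
    show d x y + e x y = d y x + e y x
    rw [hd.1.2.1, he.1.2.1]
  · intro x y z
    have := hd.1.2.2 x y z
    have := he.1.2.2 x y z
    dsimp only
    linarith
  · intro x s
    constructor
    · intro hs
      obtain ⟨ε, hε, hball⟩ := (hd.2.1 x s).mp hs
      refine ⟨ε, hε, fun y hy => hball ?_⟩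
      have := he.1.nonneg x y
      simp only [Set.mem_setOf_eq] at hy ⊢
      linarith
    · rintro ⟨ε, hε, hball⟩
      have hm1 : {y : G | d x y < ε / 2} ∈ nhds x :=
        (hd.2.1 x _).mpr ⟨ε / 2, by linarith, subset_rfl⟩
      have hm2 : {y : G | e x y < ε / 2} ∈ nhds x :=
        (he.2.1 x _).mpr ⟨ε / 2, by linarith, subset_rfl⟩
      apply Filter.mem_of_superset (Filter.inter_mem hm1 hm2)
      rintro y ⟨hy1, hy2⟩
      apply hball
      simp only [Set.mem_setOf_eq] at hy1 hy2 ⊢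
      linarith
  · intro h g f
    show d (h * g) (h * f) + e (h * g) (h * f) = d g f + e g f
    rw [hd.2.2, he.2.2]

/-- `d`-balls have finite diameter in every compatible left-invariant metric
(consequence of metric properness). -/
lemma ob_bound (hd : IsCompatibleLeftInvariantMetric G d)
    (hproper : MetricallyProperMetric G d) {e : G → G → ℝ}
    (he : IsCompatibleLeftInvariantMetric G e) (R : ℝ) :
    ∃ C : ℝ, 0 ≤ C ∧ ∀ u : G, d u 1 ≤ R → e u 1 ≤ C := by
  by_contra hcon
  push_neg at hcon
  have hex : ∀ n : ℕ, ∃ u : G, d u 1 ≤ R ∧ (n : ℝ) < e u 1 := by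
    intro n
    obtain ⟨u, hu1, hu2⟩ := hcon n (Nat.cast_nonneg n)
    exact ⟨u, hu1, hu2⟩
  choose g hg1 hg2 using hex
  have htendsto : Filter.Tendsto (fun n => d (g n) 1 + e (g n) 1) Filter.atTop Filter.atTop := by
    apply Filter.tendsto_atTop_mono
      (fun n => ?_) tendsto_natCast_atTop_atTop
    have := hd.1.nonneg (g n) 1
    have := hg2 n
    linarith
  have hinf : TendsToInfinity G g :=
    ⟨fun a b => d a b + e a b, sum_clim hd he, htendsto⟩
  have hdiv := hproper g hinf
  obtain ⟨n, hn⟩ := (Filter.tendsto_atTop.mp hdiv (R + 1)).exists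
  linarith [hg1 n]

end OB

section StepA
variable {G : Type*} [Group G] [TopologicalSpace G] {d : G → G → ℝ}

lemma exists_gen (hd : IsCompatibleLeftInvariantMetric G d)
    (hmax : ∀ e : G → G → ℝ, IsCompatibleLeftInvariantMetric G e →
      ∃ K : ℝ, 1 ≤ K ∧ ∀ g f : G, e g f ≤ K * d g f + K) :
    ∃ N : ℝ, 1 ≤ N ∧ Subgroup.closure {u : G | d u 1 ≤ N} = ⊤ := by
  classical
  by_contra hcon
  push_neg at hcon
  set V : ℕ → Subgroup G := fun n => Subgroup.closure {u : G | d u 1 ≤ (n : ℝ) + 1} with hV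
  have hVmono : ∀ m n : ℕ, m ≤ n → V m ≤ V n := by
    intro m n hmn
    apply Subgroup.closure_mono
    intro u hu
    simp only [Set.mem_setOf_eq] at hu ⊢
    have : (m : ℝ) ≤ n := Nat.cast_le.mpr hmn
    linarith
  have hVne : ∀ n : ℕ, V n ≠ ⊤ := by
    intro n
    apply hcon ((n : ℝ) + 1)
    have : (0 : ℝ) ≤ n := Nat.cast_nonneg n
    linarith
  have hpick : ∀ n : ℕ, ∃ g : G, g ∉ V n := by
    intro n
    by_contra hall
    push_neg at hall
    exact hVne n ((Subgroup.eq_top_iff' (V n)).mpr hall)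
  choose pick hpickspec using hpick
  -- the recursive scale sequence
  set nseq : ℕ → ℕ := fun k => Nat.rec 0 (fun _ nk => nk + ⌈d (pick nk) 1⌉₊ + 1) k with hnseq
  have hnseq_succ : ∀ k, nseq (k + 1) = nseq k + ⌈d (pick (nseq k)) 1⌉₊ + 1 := fun k => rfl
  set gseq : ℕ → G := fun k => pick (nseq k) with hgseq
  have hgnot : ∀ k, gseq k ∉ V (nseq k) := fun k => hpickspec (nseq k)
  have hgd : ∀ k, d (gseq k) 1 ≤ (nseq (k + 1) : ℝ) + 1 := by
    intro k
    rw [hnseq_succ]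
    push_cast
    have := Nat.le_ceil (d (pick (nseq k)) 1)
    have h0 : (0 : ℝ) ≤ (nseq k : ℝ) := Nat.cast_nonneg _
    simp only [hgseq]
    linarith
  have hnseq_mono : ∀ m n : ℕ, m ≤ n → nseq m ≤ nseq n := by
    intro m n hmn
    induction n with
    | zero =>
      have hm0 : m = 0 := by omega
      rw [hm0]
    | succ n ih =>
      rcases Nat.lt_succ_iff_lt_or_eq.mp (Nat.lt_succ_of_le hmn) with h | h
      · have := ih (by omega)
        rw [hnseq_succ]
        omega
      · rw [h]
  have hnseq_ge : ∀ k, k ≤ nseq k := by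
    intro k
    induction k with
    | zero => omega
    | succ k ih => rw [hnseq_succ]; omega
  -- the "first scale containing u" function
  have hfind_ex : ∀ u : G, ∃ k : ℕ, u ∈ V (nseq k) := by
    intro u
    set m := ⌈d u 1⌉₊ with hm
    refine ⟨m, hVmono m (nseq m) (hnseq_ge m) ?_⟩
    apply Subgroup.subset_closure
    simp only [Set.mem_setOf_eq]
    have := Nat.le_ceil (d u 1)
    linarith
  set fnd : G → ℕ := fun u => Nat.find (hfind_ex u) with hfnd
  set c : G → ℝ := fun u => ((fnd u - 1 : ℕ) : ℝ) * ((nseq (fnd u) : ℝ) + 1) with hc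
  have hc_nonneg : ∀ u, 0 ≤ c u := by
    intro u
    apply mul_nonneg (Nat.cast_nonneg _)
    have : (0 : ℝ) ≤ (nseq (fnd u) : ℝ) := Nat.cast_nonneg _
    linarith
  have hc_big : ∀ (u : G) (k : ℕ), u ∉ V (nseq k) → (k : ℝ) * ((nseq (k + 1) : ℝ) + 1) ≤ c u := by
    intro u k hu
    have hfk : k < fnd u := by
      rcases Nat.lt_or_ge k (fnd u) with h | h
      · exact h
      · exact absurd (hVmono (nseq (fnd u)) (nseq k) (hnseq_mono _ _ h) (Nat.find_spec (hfind_ex u))) hu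
    have h1 : (k : ℝ) ≤ ((fnd u - 1 : ℕ) : ℝ) := by
      have : k ≤ fnd u - 1 := by omega
      exact_mod_cast this
    have h2 : ((nseq (k + 1) : ℝ) + 1) ≤ ((nseq (fnd u) : ℝ) + 1) := by
      have : nseq (k + 1) ≤ nseq (fnd u) := hnseq_mono (k + 1) (fnd u) hfk
      have := Nat.cast_le (α := ℝ).mpr this
      linarith
    have h3 : (0 : ℝ) ≤ (nseq (k + 1) : ℝ) + 1 := by positivity
    calc (k : ℝ) * ((nseq (k + 1) : ℝ) + 1) ≤ ((fnd u - 1 : ℕ) : ℝ) * ((nseq (k + 1) : ℝ) + 1) :=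
          mul_le_mul_of_nonneg_right h1 h3
      _ ≤ c u := mul_le_mul_of_nonneg_left h2 (Nat.cast_nonneg _)
  have hc_inv : ∀ u : G, c u⁻¹ = c u := by
    intro u
    have : fnd u⁻¹ = fnd u := by
      have hiff : ∀ (w : G) (k : ℕ), w ∈ V (nseq k) ↔ w⁻¹ ∈ V (nseq k) := by
        intro w k
        constructor
        · exact fun h => inv_mem h
        · intro h; simpa using inv_mem h
      apply le_antisymm
      · exact Nat.find_le ((hiff _ (fnd u)).mpr (by simpa using Nat.find_spec (hfind_ex u)))
      · exact Nat.find_le ((hiff _ (fnd u⁻¹)).mpr (Nat.find_spec (hfind_ex u⁻¹)))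
    simp only [hc, this]
  -- the weight function
  set Λ : G → ℝ := fun u => if d u 1 ≤ 1 then d u 1 else d u 1 + c u with hΛ
  have h1 : ∀ s, d s 1 ≤ Λ s := by
    intro s
    simp only [hΛ]
    split
    · exact le_refl _
    · linarith [hc_nonneg s]
  have h2 : ∀ s, Λ s⁻¹ = Λ s := by
    intro s
    simp only [hΛ, d_inv_one hd, hc_inv]
  have h3 : ∀ s, d s 1 ≤ 1 → Λ s = d s 1 := by
    intro s hs
    simp only [hΛ, if_pos hs]
  have hclim := cm_clim hd one_pos h1 h2 h3
  obtain ⟨K, hK1, hKb⟩ := hmax (chainMet Λ) hclim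
  -- lower bound on the chain metric at gseq k
  have hlow : ∀ k : ℕ, (k : ℝ) * ((nseq (k + 1) : ℝ) + 1) ≤ chainMet Λ (gseq k) 1 := by
    intro k
    apply le_csInf (cm_nonempty Λ (gseq k) 1)
    rintro r ⟨l, hl, rfl⟩
    have hbad : ∃ s ∈ l, s ∉ V (nseq k) := by
      by_contra hall
      push_neg at hall
      have : l.prod ∈ V (nseq k) := list_prod_mem fun s hs => hall s hs
      rw [one_mul] at hl
      rw [← hl] at this
      exact hgnot k this
    obtain ⟨s, hsl, hsnot⟩ := hbad
    have hsd : ¬ d s 1 ≤ 1 := by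
      intro habs
      apply hsnot
      apply hVmono 0 (nseq k) (Nat.zero_le _)
      apply Subgroup.subset_closure
      simp only [Set.mem_setOf_eq]
      linarith
    have hΛs : Λ s = d s 1 + c s := if_neg hsd
    have hsum : Λ s ≤ (l.map Λ).sum := by
      apply List.single_le_sum
      · intro x hx
        rw [List.mem_map] at hx
        obtain ⟨t, ht, rfl⟩ := hx
        exact le_trans (hd.1.nonneg t 1) (h1 t)
      · exact List.mem_map.mpr ⟨s, hsl, rfl⟩
    have := hc_big s k hsnot
    have := hd.1.nonneg s 1
    linarith [hΛs ▸ hsum]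
  -- upper bound and contradiction
  set k : ℕ := ⌈2 * K⌉₊ + 1 with hk
  have hup : chainMet Λ (gseq k) 1 ≤ K * d (gseq k) 1 + K := hKb (gseq k) 1
  have hd1 : d (gseq k) 1 ≤ (nseq (k + 1) : ℝ) + 1 := hgd k
  have hnk1 : (1 : ℝ) ≤ (nseq (k + 1) : ℝ) + 1 := by
    have : (0 : ℝ) ≤ (nseq (k + 1) : ℝ) := Nat.cast_nonneg _
    linarith
  have hK0 : (0 : ℝ) < K := lt_of_lt_of_le one_pos hK1
  have hchain : (k : ℝ) * ((nseq (k + 1) : ℝ) + 1) ≤ 2 * K * ((nseq (k + 1) : ℝ) + 1) := by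
    calc (k : ℝ) * ((nseq (k + 1) : ℝ) + 1) ≤ chainMet Λ (gseq k) 1 := hlow k
      _ ≤ K * d (gseq k) 1 + K := hup
      _ ≤ K * ((nseq (k + 1) : ℝ) + 1) + K * ((nseq (k + 1) : ℝ) + 1) := by
          have := mul_le_mul_of_nonneg_left hd1 (le_of_lt hK0)
          have h4 : K ≤ K * ((nseq (k + 1) : ℝ) + 1) := le_mul_of_one_le_right (le_of_lt hK0) hnk1
          linarith
      _ = 2 * K * ((nseq (k + 1) : ℝ) + 1) := by ring
  have hkK : (k : ℝ) ≤ 2 * K := by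
    have hpos : (0 : ℝ) < (nseq (k + 1) : ℝ) + 1 := lt_of_lt_of_le one_pos hnk1
    exact le_of_mul_le_mul_right hchain hpos
  have : (2 * K : ℝ) < k := by
    rw [hk]
    push_cast
    have := Nat.le_ceil (2 * K)
    linarith
  linarith

end StepA

section StepB
variable {G : Type*} [Group G] [TopologicalSpace G] {d : G → G → ℝ}

lemma chainz_sum (hd : IsCompatibleLeftInvariantMetric G d) :
    ∀ (l : List G) (x : G),
      ∑ i ∈ Finset.range l.length, d (x * (l.take i).prod) (x * (l.take (i + 1)).prod)
        = (l.map fun s => d s 1).sum := by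
  intro l
  induction l with
  | nil => intro x; simp
  | cons s t ih =>
    intro x
    rw [List.length_cons, Finset.sum_range_succ']
    have h0 : d (x * ((s :: t).take 0).prod) (x * ((s :: t).take 1).prod) = d s 1 := by
      simp [d_mul_right hd]
    have hsucc : ∀ i, d (x * ((s :: t).take (i + 1)).prod) (x * ((s :: t).take (i + 2)).prod)
        = d ((x * s) * (t.take i).prod) ((x * s) * (t.take (i + 1)).prod) := by
      intro i
      simp [List.take_succ_cons, List.prod_cons, mul_assoc]
    calc (∑ i ∈ Finset.range t.length,
            d (x * ((s :: t).take (i + 1)).prod) (x * ((s :: t).take (i + 1 + 1)).prod))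
          + d (x * ((s :: t).take 0).prod) (x * ((s :: t).take (0 + 1)).prod)
        = (∑ i ∈ Finset.range t.length,
            d ((x * s) * (t.take i).prod) ((x * s) * (t.take (i + 1)).prod)) + d s 1 := by
          rw [h0]
          congr 1
          exact Finset.sum_congr rfl fun i _ => hsucc i
      _ = (t.map fun u => d u 1).sum + d s 1 := by rw [ih (x * s)]
      _ = ((s :: t).map fun u => d u 1).sum := by simp [add_comm]

lemma chainz_step (hd : IsCompatibleLeftInvariantMetric G d) {N : ℝ} :
    ∀ (l : List G) (x : G), (∀ s ∈ l, d s 1 ≤ N) →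
      ∀ i < l.length, d (x * (l.take i).prod) (x * (l.take (i + 1)).prod) ≤ N := by
  intro l
  induction l with
  | nil => intro x _ i hi; simp at hi
  | cons s t ih =>
    intro x hmem i hi
    cases i with
    | zero =>
      have : d (x * ((s :: t).take 0).prod) (x * ((s :: t).take 1).prod) = d s 1 := by
        simp [d_mul_right hd]
      rw [this]
      exact hmem s List.mem_cons_self
    | succ j =>
      have heq : d (x * ((s :: t).take (j + 1)).prod) (x * ((s :: t).take (j + 2)).prod)
          = d ((x * s) * (t.take j).prod) ((x * s) * (t.take (j + 1)).prod) := by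
        simp [List.take_succ_cons, List.prod_cons, mul_assoc]
      rw [heq]
      exact ih (x * s) (fun u hu => hmem u (List.mem_cons_of_mem s hu)) j
        (by simpa [List.length_cons, Nat.succ_lt_succ_iff] using hi)

lemma flatMap_prod {expand : G → List G} (hp : ∀ s, (expand s).prod = s) :
    ∀ l : List G, (l.flatMap expand).prod = l.prod := by
  intro l
  induction l with
  | nil => simp
  | cons s t ih => simp [List.flatMap_cons, List.prod_append, hp, ih]

lemma flatMap_sum_le {expand : G → List G} {f Λ' : G → ℝ}
    (h : ∀ s, ((expand s).map f).sum ≤ Λ' s) :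
    ∀ l : List G, ((l.flatMap expand).map f).sum ≤ (l.map Λ').sum := by
  intro l
  induction l with
  | nil => simp
  | cons s t ih =>
    simp only [List.flatMap_cons, List.map_append, List.sum_append, List.map_cons, List.sum_cons]
    have := h s
    linarith

/-- (1) implies (2): a maximal metric is large scale geodesic. -/
lemma lsg_of_max (hd : IsCompatibleLeftInvariantMetric G d)
    (hmax : ∀ e : G → G → ℝ, IsCompatibleLeftInvariantMetric G e →
      ∃ K : ℝ, 1 ≤ K ∧ ∀ g f : G, e g f ≤ K * d g f + K) :
    ∃ K : ℝ, 1 ≤ K ∧ ∀ x y : G, ∃ (n : ℕ) (z : ℕ → G), z 0 = x ∧ z n = y ∧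
      (∀ i < n, d (z i) (z (i + 1)) ≤ K) ∧
      (∑ i ∈ Finset.range n, d (z i) (z (i + 1))) ≤ K * d x y := by
  classical
  obtain ⟨N, hN1, hgen⟩ := exists_gen hd hmax
  have hN0 : (0 : ℝ) < N := lt_of_lt_of_le one_pos hN1
  set S : Set G := {u : G | d u 1 ≤ N} with hS
  have hsym : ∀ u ∈ S, u⁻¹ ∈ S := by
    intro u hu
    show d u⁻¹ 1 ≤ N
    rw [d_inv_one hd]
    exact hu
  have hSd : ∀ u ∈ S, d u 1 ≤ N := fun u hu => hu
  -- word decompositions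
  choose w hw1 hw2 hw3 using fun s : G => wm_spec hgen hsym s 1
  set Λ : G → ℝ := fun s => if d s 1 ≤ N then d s 1 else N * wordMetric S s 1 with hΛ
  have h1 : ∀ s, d s 1 ≤ Λ s := by
    intro s
    simp only [hΛ]
    split
    · exact le_refl _
    · exact d_le_eps_wm hd hgen hsym hSd s 1
  have h2 : ∀ s, Λ s⁻¹ = Λ s := by
    intro s
    simp only [hΛ, d_inv_one hd, wm_inv_one hgen hsym]
  have h3 : ∀ s, d s 1 ≤ N → Λ s = d s 1 := by
    intro s hs
    simp only [hΛ, if_pos hs]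
  obtain ⟨K, hK1, hKb⟩ := hmax (chainMet Λ) (cm_clim hd hN0 h1 h2 h3)
  have hK0 : (0 : ℝ) < K := lt_of_lt_of_le one_pos hK1
  refine ⟨max N (3 * K), le_trans hN1 (le_max_left _ _), ?_⟩
  intro x y
  by_cases hxy : d x y ≤ N
  · -- direct chain
    refine ⟨1, fun i => if i = 0 then x else y, by simp, by simp, ?_, ?_⟩
    · intro i hi
      interval_cases i
      simpa using le_trans hxy (le_max_left _ _)
    · have hd0 : 0 ≤ d x y := hd.1.nonneg x y
      have hM1 : (1 : ℝ) ≤ max N (3 * K) := le_trans hN1 (le_max_left _ _)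
      rw [Finset.sum_range_one]
      show d (if (0:ℕ) = 0 then x else y) (if (0:ℕ) + 1 = 0 then x else y) ≤ _
      norm_num
      nlinarith
  · push_neg at hxy
    have hdpos : (1 : ℝ) < d x y := lt_of_le_of_lt hN1 hxy
    -- pick a nearly optimal chain for the chain metric
    have hlt : chainMet Λ y x < chainMet Λ y x + 1 := lt_add_one _
    obtain ⟨r, ⟨l, hl, rfl⟩, hrlt⟩ := exists_lt_of_csInf_lt (cm_nonempty Λ y x) hlt
    have hEb : chainMet Λ y x ≤ K * d x y + K := by
      have := hKb y x
      rwa [hd.1.2.1 y x] at this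
    have hsum3 : (l.map Λ).sum ≤ 3 * K * d x y := by
      have : K + 1 ≤ 2 * K * d x y := by nlinarith
      linarith
    -- expand big steps into words
    set expand : G → List G := fun s => if d s 1 ≤ N then [s] else w s with hexp
    have hexp_prod : ∀ s, (expand s).prod = s := by
      intro s
      simp only [hexp]
      split
      · simp
      · rw [← one_mul (w s).prod]
        exact (hw2 s).symm
    have hexp_mem : ∀ s, ∀ u ∈ expand s, d u 1 ≤ N := by
      intro s u hu
      simp only [hexp] at hu
      split at hu
      · rw [List.mem_singleton] at hu
        subst hu
        assumption
      · exact hw1 s u hu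
    have hexp_sum : ∀ s, ((expand s).map fun u => d u 1).sum ≤ Λ s := by
      intro s
      simp only [hexp, hΛ]
      split
      · simp
      · have hlen : (((w s).map fun u => d u 1)).sum ≤ ((w s).length : ℝ) * N := by
          have := List.sum_le_card_nsmul ((w s).map fun u => d u 1) N (by
            intro x hx
            rw [List.mem_map] at hx
            obtain ⟨u, hu, rfl⟩ := hx
            exact hw1 s u hu)
          simpa [nsmul_eq_mul] using this
        rw [← hw3 s] at hlen
        linarith [hlen]
    set newl : List G := l.flatMap expand with hnewl
    have hnewl_prod : newl.prod = l.prod := flatMap_prod hexp_prod l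
    have hnewl_mem : ∀ u ∈ newl, d u 1 ≤ N := by
      intro u hu
      rw [hnewl, List.mem_flatMap] at hu
      obtain ⟨s, _, hu2⟩ := hu
      exact hexp_mem s u hu2
    have hnewl_sum : (newl.map fun u => d u 1).sum ≤ (l.map Λ).sum := flatMap_sum_le hexp_sum l
    refine ⟨newl.length, fun i => x * (newl.take i).prod, by simp, ?_, ?_, ?_⟩
    · show x * (newl.take newl.length).prod = y
      rw [List.take_length, hnewl_prod, ← hl]
    · intro i hi
      show d (x * (newl.take i).prod) (x * (newl.take (i + 1)).prod) ≤ _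
      exact le_trans (chainz_step hd newl x hnewl_mem i hi) (le_max_left _ _)
    · show (∑ i ∈ Finset.range newl.length,
          d (x * (newl.take i).prod) (x * (newl.take (i + 1)).prod)) ≤ _
      rw [chainz_sum hd newl x]
      calc (newl.map fun u => d u 1).sum ≤ (l.map Λ).sum := hnewl_sum
        _ ≤ 3 * K * d x y := hsum3
        _ ≤ max N (3 * K) * d x y :=
            mul_le_mul_of_nonneg_right (le_max_right _ _) (hd.1.nonneg x y)

end StepB

theorem maximal_metric_tfae {G : Type*} [Group G] [TopologicalSpace G]
    [IsTopologicalGroup G] [TopologicalSpace.MetrizableSpace G]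
    (d : G → G → ℝ) (hd : IsCompatibleLeftInvariantMetric G d)
    (hproper : MetricallyProperMetric G d) :
    List.TFAE
      [ -- (1) d is maximal
        ∀ e : G → G → ℝ, IsCompatibleLeftInvariantMetric G e →
          ∃ K : ℝ, 1 ≤ K ∧ ∀ g f : G, e g f ≤ K * d g f + K,
        -- (2) (G,d) is large scale geodesic
        ∃ K : ℝ, 1 ≤ K ∧ ∀ x y : G, ∃ (n : ℕ) (z : ℕ → G), z 0 = x ∧ z n = y ∧
          (∀ i < n, d (z i) (z (i + 1)) ≤ K) ∧
          (∑ i ∈ Finset.range n, d (z i) (z (i + 1))) ≤ K * d x y,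
        -- (3) some ball B_ε generates G and d is quasi-isometric to the word metric
        ∃ ε : ℝ, 0 < ε ∧ Subgroup.closure {u : G | d u 1 ≤ ε} = ⊤ ∧
          ∃ K : ℝ, 1 ≤ K ∧ ∀ g f : G,
            (1 / K) * d g f - K ≤ wordMetric {u : G | d u 1 ≤ ε} g f ∧
            wordMetric {u : G | d u 1 ≤ ε} g f ≤ K * d g f + K ] := by
  tfae_have 1 → 2
  · exact fun h => lsg_of_max hd h
  tfae_have 2 → 3
  · rintro ⟨K, hK1, hchain⟩
    have hK0 : (0 : ℝ) < K := lt_of_lt_of_le one_pos hK1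
    have hgenK : Subgroup.closure {u : G | d u 1 ≤ K} = ⊤ := by
      rw [Subgroup.eq_top_iff']
      intro g
      obtain ⟨n, z, hz0, hzn, hsteps, -⟩ := hchain 1 g
      have := chain_mem_closure hd z n hsteps
      rwa [hz0, hzn, inv_one, one_mul] at this
    have hgen2 : Subgroup.closure {u : G | d u 1 ≤ 2 * K} = ⊤ := by
      rw [eq_top_iff, ← hgenK]
      apply Subgroup.closure_mono
      intro u hu
      simp only [Set.mem_setOf_eq] at hu ⊢
      linarith
    have hsym2 : ∀ u ∈ {u : G | d u 1 ≤ 2 * K}, u⁻¹ ∈ {u : G | d u 1 ≤ 2 * K} := by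
      intro u hu
      show d u⁻¹ 1 ≤ 2 * K
      rw [d_inv_one hd]
      exact hu
    refine ⟨2 * K, by linarith, hgen2, 2 * K, by linarith, ?_⟩
    intro g f
    constructor
    · -- lower bound
      have hlow : d g f ≤ (2 * K) * wordMetric {u : G | d u 1 ≤ 2 * K} g f :=
        d_le_eps_wm hd hgen2 hsym2 (fun u hu => hu) g f
      have hwm0 : 0 ≤ wordMetric {u : G | d u 1 ≤ 2 * K} g f := wm_nonneg g f
      have h8 : d g f / (2 * K) ≤ wordMetric {u : G | d u 1 ≤ 2 * K} g f := by
        rw [div_le_iff₀ (by linarith : (0:ℝ) < 2 * K)]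
        nlinarith
      have h9 : (1 / (2 * K)) * d g f = d g f / (2 * K) := by ring
      rw [h9]
      linarith
    · -- upper bound
      obtain ⟨n, z, hz0, hzn, hsteps, hsum⟩ := hchain f g
      have hanch := anchor hd hK0 hgen2 n z hsteps
      rw [hz0, hzn] at hanch
      have h2 : (1 / K) * (∑ i ∈ Finset.range n, d (z i) (z (i + 1))) ≤
          (1 / K) * (K * d f g) :=
        mul_le_mul_of_nonneg_left hsum (by positivity)
      have h3 : (1 / K) * (K * d f g) = d f g := by field_simp
      have h4 : d f g = d g f := hd.1.2.1 f g
      have hd0 : 0 ≤ d g f := hd.1.nonneg g f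
      calc wordMetric {u : G | d u 1 ≤ 2 * K} g f ≤
            (1 / K) * (∑ i ∈ Finset.range n, d (z i) (z (i + 1))) + 1 := hanch
        _ ≤ d g f + 1 := by rw [← h4]; linarith [h2, h3]
        _ ≤ 2 * K * d g f + 2 * K := by nlinarith
  tfae_have 3 → 1
  · rintro ⟨ε, hε, hgen, K, hK1, hbounds⟩
    intro e he
    obtain ⟨C, hC0, hCb⟩ := ob_bound hd hproper he ε
    have hsym : ∀ u ∈ {u : G | d u 1 ≤ ε}, u⁻¹ ∈ {u : G | d u 1 ≤ ε} := by
      intro u hu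
      show d u⁻¹ 1 ≤ ε
      rw [d_inv_one hd]
      exact hu
    refine ⟨max 1 (C * K), le_max_left _ _, ?_⟩
    intro g f
    obtain ⟨l, hl1, hl2, hl3⟩ := wm_spec hgen hsym g f
    have hle : e g f ≤ C * l.length := by
      rw [hl2]
      exact d_le_len he l f (fun s hs => hCb s (hl1 s hs))
    have hwm : (l.length : ℝ) ≤ K * d g f + K := by
      rw [← hl3]
      exact (hbounds g f).2
    have hd0 : 0 ≤ d g f := hd.1.nonneg g f
    have h5 : e g f ≤ C * K * d g f + C * K := by
      calc e g f ≤ C * l.length := hle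
        _ ≤ C * (K * d g f + K) := mul_le_mul_of_nonneg_left hwm hC0
        _ = C * K * d g f + C * K := by ring
    have h6 : C * K ≤ max 1 (C * K) := le_max_right _ _
    have h7 : 0 ≤ max 1 (C * K) := le_trans zero_le_one (le_max_left _ _)
    nlinarith
  tfae_finish
end

section
/- (First Milnor–Švarc lemma) Suppose G is a metrisable topological group admitting a metrically proper, cobounded, continuous isometric action G ↷ (X,d) on a connected metric space (X,d). Then G admits a maximal compatible left-invariant metric. -/
open Filter Topology
open scoped Pointwise

open scoped NNReal

theorem exists_CLIM (G : Type*) [Group G] [TopologicalSpace G] [IsTopologicalGroup G]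
    [TopologicalSpace.MetrizableSpace G] :
    ∃ ρ : G → G → ℝ, IsCompatibleLeftInvariantMetric G ρ := by
  classical
  obtain ⟨B, hB⟩ := (𝓝 (1 : G)).exists_antitone_basis
  have hBmem : ∀ n, B n ∈ 𝓝 (1 : G) := fun n => hB.toHasBasis.mem_of_mem trivial
  -- key construction step
  have key : ∀ s : Set G, ∃ t : Set G, t ∈ 𝓝 (1 : G) ∧ (∀ x ∈ t, x⁻¹ ∈ t) ∧
      (s ∈ 𝓝 (1 : G) → (∀ x ∈ t, ∀ y ∈ t, ∀ z ∈ t, x * y * z ∈ s) ∧ t ⊆ s) := by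
    intro s
    by_cases hs : s ∈ 𝓝 (1 : G)
    · obtain ⟨V₁, hV₁, hV₁s⟩ := exists_nhds_one_split hs
      obtain ⟨V₂, hV₂, hV₂s⟩ := exists_nhds_one_split hV₁
      set A : Set G := V₂ ∩ V₁ with hA
      have hAmem : A ∈ 𝓝 (1 : G) := Filter.inter_mem hV₂ hV₁
      refine ⟨A ∩ A⁻¹, Filter.inter_mem hAmem (inv_mem_nhds_one G hAmem), ?_, fun _ => ⟨?_, ?_⟩⟩
      · rintro x ⟨hx1, hx2⟩
        exact ⟨by simpa using hx2, by simpa using hx1⟩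
      · rintro x ⟨⟨hx2, hx1⟩, -⟩ y ⟨⟨hy2, hy1⟩, -⟩ z ⟨⟨hz2, hz1⟩, -⟩
        exact hV₁s _ (hV₂s _ hx2 _ hy2) _ hz1
      · rintro x ⟨⟨hx2, hx1⟩, -⟩
        have h1 : (1 : G) ∈ V₂ := mem_of_mem_nhds hV₂
        have := hV₁s _ (hV₂s _ hx2 _ h1) _ (mem_of_mem_nhds hV₁)
        simpa using this
    · exact ⟨Set.univ, Filter.univ_mem, by simp, fun h => absurd h hs⟩
  choose F hF1 hF2 hF3 using key
  set W : ℕ → Set G := fun n => Nat.rec (F (B 0)) (fun m prev => F (prev ∩ B (m + 1))) n with hW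
  have hWnhds : ∀ n, W n ∈ 𝓝 (1 : G) := by
    intro n; cases n <;> exact hF1 _
  have hWsym : ∀ n, ∀ x ∈ W n, x⁻¹ ∈ W n := by
    intro n; cases n <;> exact hF2 _
  have h1W : ∀ n, (1 : G) ∈ W n := fun n => mem_of_mem_nhds (hWnhds n)
  have hWstep : ∀ n, W (n + 1) ⊆ W n ∩ B (n + 1) :=
    fun n => (hF3 _ (Filter.inter_mem (hWnhds n) (hBmem (n + 1)))).2
  have hWtriple : ∀ n, ∀ x ∈ W (n + 1), ∀ y ∈ W (n + 1), ∀ z ∈ W (n + 1), x * y * z ∈ W n := by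
    intro n x hx y hy z hz
    exact ((hF3 _ (Filter.inter_mem (hWnhds n) (hBmem (n + 1)))).1 x hx y hy z hz).1
  have hWB : ∀ n, W n ⊆ B n := by
    intro n
    cases n with
    | zero => exact (hF3 _ (hBmem 0)).2
    | succ m => exact (hWstep m).trans Set.inter_subset_right
  have hWmono : Antitone W := antitone_nat_of_succ_le fun n =>
    (hWstep n).trans Set.inter_subset_left
  -- the pre-distance
  set ν : G → ℝ≥0 := fun z => if h : ∃ n, z ∉ W n then (1 / 2) ^ Nat.find h else 0 with hν
  have hν1 : ν 1 = 0 := by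
    rw [hν]; exact dif_neg (by push_neg; exact h1W)
  have hνinv : ∀ z, ν z⁻¹ = ν z := by
    intro z
    have hiff : ∀ n, (z⁻¹ ∉ W n) ↔ (z ∉ W n) :=
      fun n => not_congr ⟨fun h => by simpa using hWsym n _ h, fun h => hWsym n z h⟩
    by_cases h : ∃ n, z ∉ W n
    · have h' : ∃ n, z⁻¹ ∉ W n := by
        obtain ⟨n, hn⟩ := h; exact ⟨n, (hiff n).2 hn⟩
      rw [hν]
      simp only [dif_pos h, dif_pos h']
      congr 1
      exact le_antisymm (Nat.find_le ((hiff _).2 (Nat.find_spec h)))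
        (Nat.find_le ((hiff _).1 (Nat.find_spec h')))
    · have h' : ¬∃ n, z⁻¹ ∉ W n := by
        push_neg at h ⊢
        intro n; exact hWsym n z (h n)
      simp only [hν]
      rw [dif_neg h', dif_neg h]
  have hhalf : (0 : ℝ≥0) < 1 / 2 := by norm_num
  have hhalf1 : (1 / 2 : ℝ≥0) < 1 := NNReal.half_lt_self one_ne_zero
  have hle : ∀ z (n : ℕ), ((1 / 2 : ℝ≥0) ^ n ≤ ν z ↔ z ∉ W n) := by
    intro z n
    simp only [hν]
    split_ifs with h
    · rw [(pow_right_strictAnti₀ hhalf hhalf1).le_iff_ge, Nat.find_le_iff]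
      constructor
      · rintro ⟨m, hmn, hm⟩ hn
        exact hm (hWmono hmn hn)
      · exact fun h' => ⟨n, le_rfl, h'⟩
    · push_neg at h
      simp only [h n, not_true_eq_false, iff_false, not_le]
      exact pow_pos hhalf n
  have hdself : ∀ x : G, ν (x⁻¹ * x) = 0 := by
    intro x; rw [inv_mul_cancel]; exact hν1
  have hdsymm : ∀ x y : G, ν (x⁻¹ * y) = ν (y⁻¹ * x) := by
    intro x y
    rw [← hνinv (x⁻¹ * y), mul_inv_rev, inv_inv]
  have hd4 : ∀ x₁ x₂ x₃ x₄ : G, ν (x₁⁻¹ * x₄) ≤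
      2 * max (ν (x₁⁻¹ * x₂)) (max (ν (x₂⁻¹ * x₃)) (ν (x₃⁻¹ * x₄))) := by
    intro x₁ x₂ x₃ x₄
    by_cases H : ∃ n, x₁⁻¹ * x₄ ∉ W n
    · have hval : ν (x₁⁻¹ * x₄) = (1 / 2) ^ Nat.find H := by rw [hν]; exact dif_pos H
      rw [hval, ← div_le_iff₀' zero_lt_two, ← mul_one_div ((1 / 2 : ℝ≥0) ^ _), ← pow_succ]
      simp only [le_max_iff, hle, ← not_and_or]
      rintro ⟨h12, h23, h34⟩
      refine Nat.find_spec H ?_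
      have : (x₁⁻¹ * x₂) * (x₂⁻¹ * x₃) * (x₃⁻¹ * x₄) ∈ W (Nat.find H) :=
        hWtriple _ _ h12 _ h23 _ h34
      simpa [mul_assoc] using this
    · have hval : ν (x₁⁻¹ * x₄) = 0 := by rw [hν]; exact dif_neg H
      rw [hval]; exact zero_le
  let I : PseudoMetricSpace G := PseudoMetricSpace.ofPreNNDist (fun x y => ν (x⁻¹ * y))
    hdself hdsymm
  set ρ : G → G → ℝ := fun x y => @dist G I.toDist x y with hρ
  have ρ_le : ∀ x y, ρ x y ≤ ν (x⁻¹ * y) :=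
    PseudoMetricSpace.dist_ofPreNNDist_le _ hdself hdsymm
  have ρ_ge : ∀ x y, (ν (x⁻¹ * y) : ℝ) ≤ 2 * ρ x y :=
    PseudoMetricSpace.le_two_mul_dist_ofPreNNDist _ hdself hdsymm hd4
  have ρ_nonneg : ∀ x y, 0 ≤ ρ x y := fun x y => @dist_nonneg G I x y
  have ρ_self : ∀ x, ρ x x = 0 := fun x => @dist_self G I x
  have ρ_comm : ∀ x y, ρ x y = ρ y x := fun x y => @dist_comm G I x y
  have ρ_triangle : ∀ x y z, ρ x z ≤ ρ x y + ρ y z := fun x y z => @dist_triangle G I x y z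
  have hsum : ∀ (h x y : G) (l : List G),
      (((h * x) :: l.map (h * ·)).zipWith (fun a b => ν (a⁻¹ * b)) ((l.map (h * ·)) ++ [h * y])).sum
        = ((x :: l).zipWith (fun a b => ν (a⁻¹ * b)) (l ++ [y])).sum := by
    intro h x y l
    have h1 : (h * x) :: l.map (h * ·) = (x :: l).map (h * ·) := by simp
    have h2 : (l.map (h * ·)) ++ [h * y] = (l ++ [y]).map (h * ·) := by simp
    rw [h1, h2, List.zipWith_map]
    have h3 : (fun a b : G => ν ((h * a)⁻¹ * (h * b))) = fun a b => ν (a⁻¹ * b) := by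
      funext u v
      rw [mul_inv_rev, mul_assoc, inv_mul_cancel_left]
    rw [h3]
  have ρ_inv : ∀ h x y : G, ρ (h * x) (h * y) = ρ x y := by
    intro h x y
    rw [show ρ (h * x) (h * y) = _ from
        PseudoMetricSpace.dist_ofPreNNDist _ hdself hdsymm (h * x) (h * y),
      show ρ x y = _ from PseudoMetricSpace.dist_ofPreNNDist _ hdself hdsymm x y]
    rw [NNReal.coe_inj]
    apply le_antisymm
    · refine le_ciInf fun l => ?_
      exact (ciInf_le (OrderBot.bddBelow _) (l.map (h * ·))).trans (le_of_eq (hsum h x y l))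
    · refine le_ciInf fun l => ?_
      have := hsum h⁻¹ (h * x) (h * y) l
      simp only [inv_mul_cancel_left] at this
      exact (ciInf_le (OrderBot.bddBelow _) (l.map (h⁻¹ * ·))).trans (le_of_eq this)
  -- the point separation property
  have ρ_zero : ∀ x y : G, ρ x y = 0 → x = y := by
    intro x y hxy
    have hν0 : ν (x⁻¹ * y) = 0 := by
      have h0 := ρ_ge x y
      rw [hxy] at h0
      have h1 : (ν (x⁻¹ * y) : ℝ) ≤ 0 := by linarith
      exact le_antisymm (by exact_mod_cast h1) zero_le
    have hall : ∀ n, x⁻¹ * y ∈ W n := by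
      by_contra hc
      push_neg at hc
      obtain ⟨n, hn⟩ := hc
      have : ν (x⁻¹ * y) ≠ 0 := by
        simp only [hν]
        rw [dif_pos ⟨n, hn⟩]
        exact (pow_pos hhalf _).ne'
      exact this hν0
    have : x⁻¹ * y = 1 := by
      by_contra hne
      have hopen : {x⁻¹ * y}ᶜ ∈ 𝓝 (1 : G) := compl_singleton_mem_nhds fun h => hne h.symm
      obtain ⟨n, -, hsub⟩ := hB.toHasBasis.mem_iff.mp hopen
      exact hsub (hWB n (hall n)) rfl
    exact (inv_mul_eq_one.mp this)
  -- compatibility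
  have hcompat : ∀ (x : G) (s : Set G), s ∈ 𝓝 x ↔ ∃ ε > (0 : ℝ), {y : G | ρ x y < ε} ⊆ s := by
    intro x s
    have hnhds : s ∈ 𝓝 x ↔ (x * ·) ⁻¹' s ∈ 𝓝 (1 : G) := by
      rw [← map_mul_left_nhds_one x, Filter.mem_map]
    constructor
    · intro hs
      obtain ⟨n, -, hsub⟩ := hB.toHasBasis.mem_iff.mp (hnhds.mp hs)
      have hWn : W (n + 1) ⊆ (x * ·) ⁻¹' s := fun z hz =>
        hsub (hWB n (hWmono (Nat.le_succ n) hz))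
      refine ⟨((1 / 2 : ℝ) ^ (n + 1)) / 2, by positivity, ?_⟩
      intro y hy
      simp only [Set.mem_setOf_eq] at hy
      have h1 : (ν (x⁻¹ * y) : ℝ) < (1 / 2 : ℝ) ^ (n + 1) := by
        calc (ν (x⁻¹ * y) : ℝ) ≤ 2 * ρ x y := ρ_ge x y
        _ < 2 * (((1 / 2 : ℝ) ^ (n + 1)) / 2) := by linarith
        _ = (1 / 2 : ℝ) ^ (n + 1) := by ring
      have h2 : x⁻¹ * y ∈ W (n + 1) := by
        by_contra hc
        have := (hle (x⁻¹ * y) (n + 1)).mpr hc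
        have : ((1 / 2 : ℝ≥0) ^ (n + 1) : ℝ) ≤ (ν (x⁻¹ * y) : ℝ) := NNReal.coe_le_coe.mpr this
        push_cast at this
        linarith
      have := hWn h2
      simpa [mul_inv_cancel_left] using this
    · rintro ⟨ε, hε, hsub⟩
      rw [hnhds]
      obtain ⟨n, hn⟩ := exists_pow_lt_of_lt_one hε (by norm_num : (1 / 2 : ℝ) < 1)
      refine Filter.mem_of_superset (hWnhds n) ?_
      intro z hz
      have hρz : ρ x (x * z) ≤ ((1 / 2 : ℝ≥0) ^ n : ℝ) := by
        have h1 : ρ x (x * z) = ρ 1 z := by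
          have := ρ_inv x 1 z
          simpa using this
        have h2 : ρ 1 z ≤ (ν z : ℝ) := by simpa using ρ_le 1 z
        have h3 : ν z ≤ (1 / 2 : ℝ≥0) ^ n := by
          simp only [hν]
          split_ifs with h
          · have hfind : n < Nat.find h := by
              rw [Nat.lt_find_iff]
              intro m hm
              simp only [not_not]
              exact hWmono hm hz
            exact le_of_lt (pow_lt_pow_right_of_lt_one₀ hhalf hhalf1 hfind)
          · exact zero_le
        rw [h1]
        exact h2.trans (NNReal.coe_le_coe.mpr h3)
      refine hsub ?_
      simp only [Set.mem_setOf_eq]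
      calc ρ x (x * z) ≤ ((1 / 2 : ℝ≥0) ^ n : ℝ) := hρz
      _ = (1 / 2 : ℝ) ^ n := by push_cast; ring
      _ < ε := hn
  exact ⟨ρ, ⟨fun x y => ⟨ρ_zero x y, fun h => h ▸ ρ_self x⟩, ρ_comm, ρ_triangle⟩, hcompat, ρ_inv⟩

theorem first_milnor_svarc {G : Type*} [Group G] [TopologicalSpace G]
    [IsTopologicalGroup G] [TopologicalSpace.MetrizableSpace G]
    {X : Type*} [MetricSpace X] [ConnectedSpace X] (a : G → X → X)
    (hone : ∀ x : X, a 1 x = x)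
    (hmul : ∀ (g h : G) (x : X), a (g * h) x = a g (a h x))
    (hiso : ∀ (g : G) (x y : X), dist (a g x) (a g y) = dist x y)
    (hcont : Continuous fun p : G × X => a p.1 p.2)
    (hproper : ∀ (x : X) (g : ℕ → G), TendsToInfinity G g →
      Filter.Tendsto (fun n => dist (a (g n) x) x) Filter.atTop Filter.atTop)
    (hcobounded : ∃ A : Set X, (∃ C : ℝ, ∀ x ∈ A, ∀ y ∈ A, dist x y ≤ C) ∧
      ∀ x : X, ∃ g : G, ∃ y ∈ A, x = a g y) :
    ∃ d : G → G → ℝ, IsCompatibleLeftInvariantMetric G d ∧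
      ∀ e : G → G → ℝ, IsCompatibleLeftInvariantMetric G e →
        ∃ K : ℝ, 1 ≤ K ∧ ∀ g f : G, e g f ≤ K * d g f + K := by
  classical
  obtain ⟨ρ, hρ⟩ := exists_CLIM G
  obtain ⟨⟨ρ_zero_iff, ρ_comm, ρ_tri⟩, ρ_compat, ρ_inv⟩ := hρ
  have ρ_nonneg : ∀ x y : G, 0 ≤ ρ x y := by
    intro x y
    have h1 := ρ_tri x y x
    have h2 := ρ_comm y x
    have h3 := (ρ_zero_iff x x).mpr rfl
    linarith
  set ρ' : G → G → ℝ := fun x y => min (ρ x y) 1 with hρ'def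
  have ρ'_nonneg : ∀ x y : G, 0 ≤ ρ' x y := fun x y => le_min (ρ_nonneg x y) zero_le_one
  have ρ'_comm : ∀ x y : G, ρ' x y = ρ' y x := fun x y => by rw [hρ'def]; simp [ρ_comm x y]
  have ρ'_self : ∀ x : G, ρ' x x = 0 := fun x => by
    simp [hρ'def, (ρ_zero_iff x x).mpr rfl]
  have ρ'_tri : ∀ x y z : G, ρ' x z ≤ ρ' x y + ρ' y z := by
    intro x y z
    rcases le_or_gt 1 (ρ x y) with h | h
    · have : ρ' x y = 1 := min_eq_right h
      have h2 := ρ'_nonneg y z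
      have h3 : ρ' x z ≤ 1 := min_le_right _ _
      linarith
    rcases le_or_gt 1 (ρ y z) with h' | h'
    · have : ρ' y z = 1 := min_eq_right h'
      have h2 := ρ'_nonneg x y
      have h3 : ρ' x z ≤ 1 := min_le_right _ _
      linarith
    · have e1 : ρ' x y = ρ x y := min_eq_left h.le
      have e2 : ρ' y z = ρ y z := min_eq_left h'.le
      have h3 : ρ' x z ≤ ρ x z := min_le_left _ _
      have := ρ_tri x y z
      linarith
  have ρ'_inv : ∀ h x y : G, ρ' (h * x) (h * y) = ρ' x y := fun h x y => by
    simp [hρ'def, ρ_inv h x y]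
  -- base point and coboundedness data
  obtain ⟨x₀⟩ : Nonempty X := inferInstance
  obtain ⟨A, ⟨C, hC⟩, hcover⟩ := hcobounded
  obtain ⟨g₀, y₀, hy₀A, hx₀⟩ := hcover x₀
  have hC0 : 0 ≤ C := le_trans dist_nonneg (hC y₀ hy₀A y₀ hy₀A)
  have horbit : ∀ x : X, ∃ h : G, dist x (a h x₀) ≤ C := by
    intro x
    obtain ⟨k, y, hyA, rfl⟩ := hcover x
    refine ⟨k * g₀⁻¹, ?_⟩
    have : a (k * g₀⁻¹) x₀ = a k y₀ := by
      rw [hx₀, ← hmul, inv_mul_cancel_right]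
    rw [this, hiso]
    exact hC y hyA y₀ hy₀A
  -- displacement function
  set φ : G → ℝ := fun g => dist (a g x₀) x₀ with hφdef
  have φ_cont : Continuous φ :=
    Continuous.dist (hcont.comp (continuous_id.prodMk continuous_const)) continuous_const
  have φ_one : φ 1 = 0 := by simp [hφdef, hone]
  have φ_dist : ∀ g h : G, φ (g⁻¹ * h) = dist (a h x₀) (a g x₀) := by
    intro g h
    have h1 : a g (a (g⁻¹ * h) x₀) = a h x₀ := by
      rw [← hmul, mul_inv_cancel_left]
    have h2 := hiso g (a (g⁻¹ * h) x₀) x₀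
    rw [h1] at h2
    rw [hφdef]
    simpa using h2.symm
  have φ_inv : ∀ g : G, φ g⁻¹ = φ g := by
    intro g
    have := φ_dist g 1
    simp only [mul_one] at this
    rw [this, hone, hφdef]
    exact dist_comm _ _
  set R : ℝ := 2 * C + 3 with hRdef
  have hR1 : (1 : ℝ) ≤ R := by rw [hRdef]; linarith
  -- the chain sets
  set S : G → G → Set ℝ := fun g f =>
    {r | ∃ n : ℕ, ∃ c : ℕ → G, c 0 = g ∧ c n = f ∧ (∀ i < n, φ ((c i)⁻¹ * c (i + 1)) < R) ∧
      r = ∑ i ∈ Finset.range n, ρ' (c i) (c (i + 1))} with hSdef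
  have S_nonneg : ∀ g f : G, ∀ r ∈ S g f, (0 : ℝ) ≤ r := by
    rintro g f r ⟨n, c, -, -, -, rfl⟩
    exact Finset.sum_nonneg fun i _ => ρ'_nonneg _ _
  have S_bdd : ∀ g f : G, BddBelow (S g f) := fun g f => ⟨0, fun r hr => S_nonneg g f r hr⟩
  have sum_ge : ∀ (c : ℕ → G) (n : ℕ),
      ρ' (c 0) (c n) ≤ ∑ i ∈ Finset.range n, ρ' (c i) (c (i + 1)) := by
    intro c n
    induction n with
    | zero => simp [ρ'_self]
    | succ m IH =>
      rw [Finset.sum_range_succ]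
      calc ρ' (c 0) (c (m + 1)) ≤ ρ' (c 0) (c m) + ρ' (c m) (c (m + 1)) := ρ'_tri _ _ _
      _ ≤ _ := by linarith
  have S_lb : ∀ g f : G, ∀ r ∈ S g f, ρ' g f ≤ r := by
    rintro g f r ⟨n, c, hc0, hcn, -, rfl⟩
    rw [← hc0, ← hcn]
    exact sum_ge c n
  have S_zero_mem : ∀ g : G, (0 : ℝ) ∈ S g g := by
    intro g
    exact ⟨0, fun _ => g, rfl, rfl, by omega, by simp⟩
  have S_single : ∀ g f : G, φ (g⁻¹ * f) < R → ρ' g f ∈ S g f := by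
    intro g f hgf
    refine ⟨1, fun i => if i = 0 then g else f, by simp, by simp, ?_, by simp⟩
    intro i hi
    interval_cases i
    simpa using hgf
  have S_shift : ∀ (h g f : G) (r : ℝ), r ∈ S g f → r ∈ S (h * g) (h * f) := by
    rintro h g f r ⟨n, c, hc0, hcn, hsteps, rfl⟩
    refine ⟨n, fun i => h * c i, by simp [hc0], by simp [hcn], ?_, ?_⟩
    · intro i hi
      beta_reduce
      have : (h * c i)⁻¹ * (h * c (i + 1)) = (c i)⁻¹ * c (i + 1) := by
        rw [mul_inv_rev, mul_assoc, inv_mul_cancel_left]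
      rw [this]
      exact hsteps i hi
    · exact Finset.sum_congr rfl fun i _ => (ρ'_inv h _ _).symm
  have S_symm : ∀ (g f : G) (r : ℝ), r ∈ S g f → r ∈ S f g := by
    rintro g f r ⟨n, c, hc0, hcn, hsteps, rfl⟩
    refine ⟨n, fun i => c (n - i), by simpa using hcn, by simpa using hc0, ?_, ?_⟩
    · intro i hi
      beta_reduce
      have e1 : n - (i + 1) = n - 1 - i := by omega
      have e2 : n - i = (n - 1 - i) + 1 := by omega
      have hlt : n - 1 - i < n := by omega
      have := hsteps (n - 1 - i) hlt
      rw [e1, e2]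
      have hφsym : φ (((c (n - 1 - i)))⁻¹ * c ((n - 1 - i) + 1)) =
          φ ((c ((n - 1 - i) + 1))⁻¹ * c (n - 1 - i)) := by
        rw [← φ_inv, mul_inv_rev, inv_inv]
      rw [← hφsym]
      exact this
    · beta_reduce
      rw [← Finset.sum_range_reflect (fun j => ρ' (c j) (c (j + 1))) n]
      refine Finset.sum_congr rfl fun i hi => ?_
      rw [Finset.mem_range] at hi
      have e1 : n - (i + 1) = n - 1 - i := by omega
      have e2 : n - i = (n - 1 - i) + 1 := by omega
      rw [e1, e2, ρ'_comm]
  have S_append : ∀ (g f k : G) (r : ℝ), r ∈ S g f → φ (f⁻¹ * k) < R → r + ρ' f k ∈ S g k := by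
    rintro g f k r ⟨n, c, hc0, hcn, hsteps, rfl⟩ hstep
    refine ⟨n + 1, fun i => if i ≤ n then c i else k, ?_, ?_, ?_, ?_⟩
    · simp [Nat.zero_le n, hc0]
    · simp
    · intro i hi
      beta_reduce
      rcases Nat.lt_or_ge i n with h | h
      · have e1 : (if i ≤ n then c i else k) = c i := if_pos (by omega)
        have e2 : (if i + 1 ≤ n then c (i + 1) else k) = c (i + 1) := if_pos (by omega)
        rw [e1, e2]
        exact hsteps i h
      · have hin : i = n := by omega
        subst hin
        have e1 : (if i ≤ i then c i else k) = c i := if_pos le_rfl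
        have e2 : (if i + 1 ≤ i then c (i + 1) else k) = k := if_neg (by omega)
        rw [e1, e2, hcn]
        exact hstep
    · beta_reduce
      rw [Finset.sum_range_succ]
      congr 1
      · refine Finset.sum_congr rfl fun i hi => ?_
        rw [Finset.mem_range] at hi
        have e1 : (if i ≤ n then c i else k) = c i := if_pos (by omega)
        have e2 : (if i + 1 ≤ n then c (i + 1) else k) = c (i + 1) := if_pos (by omega)
        rw [e1, e2]
      · have e1 : (if n ≤ n then c n else k) = c n := if_pos le_rfl
        have e2 : (if n + 1 ≤ n then c (n + 1) else k) = k := if_neg (by omega)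
        rw [e1, e2, hcn]
  have S_concat : ∀ (g f k : G) (r₁ r₂ : ℝ), r₁ ∈ S g f → r₂ ∈ S f k → r₁ + r₂ ∈ S g k := by
    intro g f k r₁ r₂ h₁ h₂
    obtain ⟨n, c, hc0, hcn, hsteps, rfl⟩ := h₂
    subst hcn
    clear hC
    induction n with
    | zero => simpa [← hc0] using h₁
    | succ m IH =>
      have IH' := IH (fun i hi => hsteps i (by omega))
      have := S_append g (c m) (c (m + 1)) _ IH' (hsteps m (by omega))
      rw [Finset.sum_range_succ, ← add_assoc]
      exact this
  -- every pair is connected by a chain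
  have Sne1 : ∀ g : G, (S 1 g).Nonempty := by
    set U : Set X := {x | ∃ g : G, (S 1 g).Nonempty ∧ dist x (a g x₀) < C + 1} with hUdef
    have hUopen : IsOpen U := by
      rw [Metric.isOpen_iff]
      rintro x ⟨g, hg, hd⟩
      refine ⟨C + 1 - dist x (a g x₀), by linarith, ?_⟩
      intro y hy
      rw [Metric.mem_ball] at hy
      refine ⟨g, hg, ?_⟩
      calc dist y (a g x₀) ≤ dist y x + dist x (a g x₀) := dist_triangle _ _ _
      _ < C + 1 := by linarith
    have hUclosed : IsClosed U := by
      rw [← isOpen_compl_iff, Metric.isOpen_iff]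
      intro x hx
      refine ⟨1, one_pos, ?_⟩
      intro y hy
      rw [Metric.mem_ball] at hy
      intro hyU
      obtain ⟨g, ⟨r, hr⟩, hdy⟩ := hyU
      obtain ⟨h, hh⟩ := horbit x
      apply hx
      have hstep : φ (g⁻¹ * h) < R := by
        rw [φ_dist]
        calc dist (a h x₀) (a g x₀) ≤ dist (a h x₀) x + dist x y + dist y (a g x₀) :=
          dist_triangle4 _ _ _ _
        _ < C + 1 + (C + 1) := by
            have := dist_comm x (a h x₀)
            rw [dist_comm y x] at hy
            linarith
        _ < R := by rw [hRdef]; linarith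
      refine ⟨h, ⟨r + ρ' g h, S_append 1 g h r hr hstep⟩, ?_⟩
      calc dist x (a h x₀) ≤ C := hh
      _ < C + 1 := by linarith
    have hUne : U.Nonempty := by
      refine ⟨x₀, 1, ⟨0, S_zero_mem 1⟩, ?_⟩
      rw [hone]
      simp
      linarith
    have hUuniv : U = Set.univ := IsClopen.eq_univ ⟨hUclosed, hUopen⟩ hUne
    intro g
    have hgU : a g x₀ ∈ U := by rw [hUuniv]; trivial
    obtain ⟨h, ⟨r, hr⟩, hd⟩ := hgU
    have hstep : φ (h⁻¹ * g) < R := by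
      rw [φ_dist]
      calc dist (a g x₀) (a h x₀) < C + 1 := hd
      _ ≤ R := by rw [hRdef]; linarith
    exact ⟨r + ρ' h g, S_append 1 h g r hr hstep⟩
  have Sne : ∀ g f : G, (S g f).Nonempty := by
    intro g f
    obtain ⟨r, hr⟩ := Sne1 (g⁻¹ * f)
    have := S_shift g 1 (g⁻¹ * f) r hr
    rw [mul_one, mul_inv_cancel_left] at this
    exact ⟨r, this⟩
  -- the metric
  set d : G → G → ℝ := fun g f => sInf (S g f) with hddef
  have d_nonneg : ∀ g f : G, 0 ≤ d g f := fun g f => le_csInf (Sne g f) (S_nonneg g f)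
  have d_ge : ∀ g f : G, ρ' g f ≤ d g f := fun g f => le_csInf (Sne g f) (S_lb g f)
  have d_self : ∀ g : G, d g g = 0 :=
    fun g => le_antisymm (csInf_le (S_bdd g g) (S_zero_mem g)) (d_nonneg g g)
  have d_zero : ∀ g f : G, d g f = 0 → g = f := by
    intro g f h
    have h1 : ρ' g f ≤ 0 := h ▸ d_ge g f
    have h2 : ρ' g f = 0 := le_antisymm h1 (ρ'_nonneg g f)
    rcases min_cases (ρ g f) 1 with ⟨he, -⟩ | ⟨he, hge⟩
    · have : ρ g f = 0 := by rw [hρ'def] at h2; simp only at h2; rw [he] at h2; exact h2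
      exact (ρ_zero_iff g f).mp this
    · exfalso
      rw [hρ'def] at h2; simp only at h2; rw [he] at h2
      norm_num at h2
  have d_comm : ∀ g f : G, d g f = d f g := by
    intro g f
    rw [hddef]
    simp only
    congr 1
    apply Set.Subset.antisymm
    · exact fun r hr => S_symm g f r hr
    · exact fun r hr => S_symm f g r hr
  have d_tri : ∀ g f k : G, d g k ≤ d g f + d f k := by
    intro g f k
    have key : ∀ r₂ ∈ S f k, d g k ≤ d g f + r₂ := by
      intro r₂ h₂
      have h3 : ∀ r₁ ∈ S g f, d g k - r₂ ≤ r₁ := by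
        intro r₁ h₁
        have := csInf_le (S_bdd g k) (S_concat g f k r₁ r₂ h₁ h₂)
        linarith
      have := le_csInf (Sne g f) h3
      linarith
    have h4 : ∀ r₂ ∈ S f k, d g k - d g f ≤ r₂ := fun r₂ h₂ => by
      have := key r₂ h₂; linarith
    have := le_csInf (Sne f k) h4
    linarith
  have d_inv : ∀ h g f : G, d (h * g) (h * f) = d g f := by
    intro h g f
    rw [hddef]
    simp only
    congr 1
    apply Set.Subset.antisymm
    · intro r hr
      have := S_shift h⁻¹ (h * g) (h * f) r hr
      simpa [inv_mul_cancel_left] using this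
    · exact fun r hr => S_shift h g f r hr
  -- small scale control
  have hφRnhds : {h : G | φ h < 1} ∈ nhds (1 : G) :=
    (isOpen_lt φ_cont continuous_const).mem_nhds (by simp [φ_one])
  obtain ⟨η₀, hη₀pos, hη₀sub⟩ := (ρ_compat 1 {h : G | φ h < 1}).mp hφRnhds
  set η : ℝ := min η₀ 1 with hηdef
  have hηpos : 0 < η := lt_min hη₀pos one_pos
  have hηle1 : η ≤ 1 := min_le_right _ _
  have key_small : ∀ u v : G, ρ' u v < η → φ (u⁻¹ * v) < 1 ∧ d u v ≤ ρ' u v := by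
    intro u v huv
    have hρuv : ρ u v < η₀ := by
      rcases min_cases (ρ u v) 1 with ⟨he, -⟩ | ⟨he, -⟩
      · rw [hρ'def] at huv; simp only at huv; rw [he] at huv
        exact lt_of_lt_of_le huv (min_le_left _ _)
      · exfalso
        rw [hρ'def] at huv; simp only at huv; rw [he] at huv
        linarith
    have hρ1 : ρ 1 (u⁻¹ * v) < η₀ := by
      have := ρ_inv u 1 (u⁻¹ * v)
      rw [mul_one, mul_inv_cancel_left] at this
      rw [← this]
      exact hρuv
    have hφ : φ (u⁻¹ * v) < 1 := hη₀sub hρ1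
    refine ⟨hφ, csInf_le (S_bdd u v) (S_single u v ?_)⟩
    exact lt_of_lt_of_le hφ hR1
  -- compatibility of d
  have d_compat : ∀ (x : G) (s : Set G), s ∈ nhds x ↔ ∃ ε > (0 : ℝ), {y : G | d x y < ε} ⊆ s := by
    intro x s
    constructor
    · intro hs
      obtain ⟨ε, hε, hsub⟩ := (ρ_compat x s).mp hs
      refine ⟨min ε 1, lt_min hε one_pos, ?_⟩
      intro y hy
      simp only [Set.mem_setOf_eq] at hy
      have h1 : ρ' x y < min ε 1 := lt_of_le_of_lt (d_ge x y) hy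
      have h2 : ρ x y < ε := by
        rcases min_cases (ρ x y) 1 with ⟨he, -⟩ | ⟨he, -⟩
        · rw [hρ'def] at h1; simp only at h1; rw [he] at h1
          exact lt_of_lt_of_le h1 (min_le_left _ _)
        · exfalso
          rw [hρ'def] at h1; simp only at h1; rw [he] at h1
          have := min_le_right ε 1
          linarith
      exact hsub h2
    · rintro ⟨ε, hε, hsub⟩
      rw [ρ_compat x s]
      refine ⟨min η ε, lt_min hηpos hε, ?_⟩
      intro y hy
      simp only [Set.mem_setOf_eq] at hy
      have h1 : ρ' x y < η := by
        have : ρ' x y ≤ ρ x y := min_le_left _ _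
        have := lt_of_le_of_lt this hy
        exact lt_of_lt_of_le this (min_le_left _ _)
      have h2 := (key_small x y h1).2
      refine hsub ?_
      simp only [Set.mem_setOf_eq]
      have : ρ' x y ≤ ρ x y := min_le_left _ _
      calc d x y ≤ ρ' x y := h2
      _ ≤ ρ x y := this
      _ < min η ε := hy
      _ ≤ ε := min_le_right _ _
  have hd_clim : IsCompatibleLeftInvariantMetric G d :=
    ⟨⟨fun g f => ⟨d_zero g f, fun h => h ▸ d_self g⟩, d_comm, d_tri⟩, d_compat, d_inv⟩
  refine ⟨d, hd_clim, ?_⟩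
  -- maximality
  intro e he
  obtain ⟨⟨e_zero_iff, e_comm, e_tri⟩, e_compat, e_inv⟩ := id he
  have e_nonneg : ∀ x y : G, 0 ≤ e x y := by
    intro x y
    have h1 := e_tri x y x
    have h2 := e_comm y x
    have h3 := (e_zero_iff x x).mpr rfl
    linarith
  -- property (OB) of the R-ball
  have hM : ∃ M : ℝ, 0 ≤ M ∧ ∀ h : G, φ h < R → e 1 h ≤ M := by
    by_contra hcon
    push_neg at hcon
    have hseq : ∀ n : ℕ, ∃ h : G, φ h < R ∧ (n : ℝ) < e 1 h := by
      intro n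
      obtain ⟨h, hh1, hh2⟩ := hcon (n : ℝ) (Nat.cast_nonneg n)
      exact ⟨h, hh1, hh2⟩
    choose w hw1 hw2 using hseq
    have hinf : TendsToInfinity G w := by
      refine ⟨e, he, ?_⟩
      apply tendsto_atTop_mono (fun n => ?_) tendsto_natCast_atTop_atTop
      rw [e_comm]
      exact (hw2 n).le
    have := hproper x₀ w hinf
    obtain ⟨n, hn⟩ := (this.eventually_ge_atTop R).exists
    have := hw1 n
    rw [hφdef] at this
    linarith
  obtain ⟨M, hM0, hMb⟩ := hM
  have e_between : ∀ u v : G, φ (u⁻¹ * v) < R → e u v ≤ M := by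
    intro u v huv
    have h1 := e_inv u⁻¹ u v
    rw [inv_mul_cancel] at h1
    rw [← h1]
    exact hMb _ huv
  set K : ℝ := 2 * M / η with hKdef
  have hK0 : 0 ≤ K := div_nonneg (by linarith) hηpos.le
  have hKη : K * η = 2 * M := div_mul_cancel₀ _ hηpos.ne'
  -- the key induction
  have keyInd : ∀ n : ℕ, ∀ c : ℕ → G, (∀ i < n, φ ((c i)⁻¹ * c (i + 1)) < R) →
      e (c 0) (c n) ≤ K * (∑ i ∈ Finset.range n, ρ' (c i) (c (i + 1))) + M := by
    intro n
    induction n using Nat.strong_induction_on with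
    | _ n IH =>
      intro c hsteps
      have T_nonneg : ∀ j : ℕ, (0 : ℝ) ≤ ∑ i ∈ Finset.range j, ρ' (c i) (c (i + 1)) :=
        fun j => Finset.sum_nonneg fun i _ => ρ'_nonneg _ _
      have hsmall : ∀ j : ℕ, (∑ i ∈ Finset.range j, ρ' (c i) (c (i + 1))) < η →
          e (c 0) (c j) ≤ M := by
        intro j hj
        have h1 : ρ' (c 0) (c j) ≤ _ := sum_ge c j
        have h2 := key_small (c 0) (c j) (lt_of_le_of_lt h1 hj)
        exact e_between _ _ (lt_of_lt_of_le h2.1 hR1)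
      by_cases hTn : (∑ i ∈ Finset.range n, ρ' (c i) (c (i + 1))) < η
      · have := hsmall n hTn
        have hKT : 0 ≤ K * (∑ i ∈ Finset.range n, ρ' (c i) (c (i + 1))) :=
          mul_nonneg hK0 (T_nonneg n)
        linarith
      · have hex : ∃ j, ¬ (∑ i ∈ Finset.range j, ρ' (c i) (c (i + 1))) < η := ⟨n, hTn⟩
        have hfind0 : Nat.find hex ≠ 0 := by
          intro h0
          have := Nat.find_spec hex
          rw [h0] at this
          simp only [Finset.range_zero, Finset.sum_empty] at this
          exact this hηpos
        obtain ⟨k, hke⟩ := Nat.exists_eq_succ_of_ne_zero hfind0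
        have hk1 : (∑ i ∈ Finset.range k, ρ' (c i) (c (i + 1))) < η := by
          have := Nat.find_min hex (by omega : k < Nat.find hex)
          exact not_not.mp this
        have hk2 : η ≤ ∑ i ∈ Finset.range (k + 1), ρ' (c i) (c (i + 1)) := by
          have := Nat.find_spec hex
          rw [hke] at this
          exact not_lt.mp this
        have hkn : k + 1 ≤ n := by
          have : Nat.find hex ≤ n := Nat.find_le hTn
          omega
        have e1 : e (c 0) (c k) ≤ M := hsmall k hk1
        have e2 : e (c k) (c (k + 1)) ≤ M := e_between _ _ (hsteps k (by omega))
        have htail := IH (n - (k + 1)) (by omega) (fun i => c (k + 1 + i))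
          (fun i hi => hsteps (k + 1 + i) (by omega))
        have hcend : k + 1 + (n - (k + 1)) = n := by omega
        beta_reduce at htail
        simp only [← add_assoc] at htail
        rw [hcend] at htail
        have hsplit : (∑ i ∈ Finset.range n, ρ' (c i) (c (i + 1))) =
            (∑ i ∈ Finset.range (k + 1), ρ' (c i) (c (i + 1))) +
            ∑ i ∈ Finset.range (n - (k + 1)), ρ' (c (k + 1 + i)) (c (k + 1 + i + 1)) := by
          have hn' : n = (k + 1) + (n - (k + 1)) := by omega
          calc (∑ i ∈ Finset.range n, ρ' (c i) (c (i + 1)))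
              = ∑ i ∈ Finset.range ((k + 1) + (n - (k + 1))), ρ' (c i) (c (i + 1)) := by
                rw [← hn']
          _ = _ := by rw [Finset.sum_range_add]
        have etotal : e (c 0) (c n) ≤ e (c 0) (c k) + e (c k) (c (k + 1)) + e (c (k + 1)) (c n) := by
          calc e (c 0) (c n) ≤ e (c 0) (c (k + 1)) + e (c (k + 1)) (c n) := e_tri _ _ _
          _ ≤ e (c 0) (c k) + e (c k) (c (k + 1)) + e (c (k + 1)) (c n) := by
              have := e_tri (c 0) (c k) (c (k + 1))
              linarith
        set T' : ℝ := ∑ i ∈ Finset.range (n - (k + 1)), ρ' (c (k + 1 + i)) (c (k + 1 + i + 1))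
          with hT'def
        have hT'0 : 0 ≤ T' := Finset.sum_nonneg fun i _ => ρ'_nonneg _ _
        have hTbig : η + T' ≤ ∑ i ∈ Finset.range n, ρ' (c i) (c (i + 1)) := by
          rw [hsplit]
          linarith
        have hKmono : K * (η + T') ≤ K * (∑ i ∈ Finset.range n, ρ' (c i) (c (i + 1))) :=
          mul_le_mul_of_nonneg_left hTbig hK0
        have hexp : K * (η + T') = 2 * M + K * T' := by
          rw [mul_add, hKη]
        linarith
  -- conclude maximality
  have hmain : ∀ g f : G, e g f ≤ K * d g f + M := by
    intro g f
    have hmem : ∀ r ∈ S g f, e g f ≤ K * r + M := by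
      rintro r ⟨n, c, hc0, hcn, hsteps, rfl⟩
      rw [← hc0, ← hcn]
      exact keyInd n c hsteps
    rcases eq_or_lt_of_le hK0 with hK0' | hKpos
    · obtain ⟨r, hr⟩ := Sne g f
      have h1 := hmem r hr
      rw [← hK0'] at h1 ⊢
      simpa using h1
    · have h3 : ∀ r ∈ S g f, (e g f - M) / K ≤ r := by
        intro r hr
        rw [div_le_iff₀ hKpos]
        have := hmem r hr
        nlinarith
      have hq : (e g f - M) / K ≤ d g f := le_csInf (Sne g f) h3
      have h4 : e g f - M ≤ d g f * K := (div_le_iff₀ hKpos).mp hq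
      have h5 : d g f * K = K * d g f := mul_comm _ _
      linarith
  refine ⟨max 1 (max K M), le_max_left _ _, ?_⟩
  intro g f
  have h1 : K * d g f ≤ max 1 (max K M) * d g f :=
    mul_le_mul_of_nonneg_right ((le_max_left K M).trans (le_max_right 1 _)) (d_nonneg g f)
  have h2 : M ≤ max 1 (max K M) := (le_max_right K M).trans (le_max_right 1 _)
  have := hmain g f
  linarith
end

section
/- Let G be a topological group and d a compatible left-invariant metric on G. Then there exist a real Banach space X, a strongly continuous homomorphism π from G into the group of surjective linear isometries of X (i.e., g ↦ π(g)ξ is continuous for every ξ ∈ X), and a continuous map b: G → X satisfying the cocycle identity b(gf) = π(g)b(f) + b(g) for all g,f ∈ G, such that ‖b(g)‖ = d(g,1) for all g ∈ G. In particular, if d is metrically proper, then b is a metrically proper map from (G,d) to X. -/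
open Filter Topology
open scoped Pointwise

open Filter Topology

namespace ArensEellsAux

variable {G : Type u} [Group G] [TopologicalSpace G] [IsTopologicalGroup G]
variable (d : G → G → ℝ)

/-- local abbreviation for the hypotheses -/
def Hyp : Prop := (∀ x y, d x y = 0 ↔ x = y) ∧ (∀ x y, d x y = d y x) ∧
  (∀ x y z, d x z ≤ d x y + d y z) ∧
  (∀ (x : G) (s : Set G), s ∈ nhds x ↔ ∃ ε > (0 : ℝ), {y : G | d x y < ε} ⊆ s) ∧
  (∀ h g f : G, d (h * g) (h * f) = d g f)

variable (hd : Hyp d)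

include hd

theorem d_nonneg (x y : G) : 0 ≤ d x y := by
  have h1 : d x x = 0 := (hd.1 x x).mpr rfl
  have h2 := hd.2.2.1 x y x
  have h3 := hd.2.1 y x
  linarith

theorem abs_sub_le_d (x y z : G) : |d x z - d y z| ≤ d x y := by
  have h1 := hd.2.2.1 x y z
  have h2 := hd.2.2.1 y x z
  have h3 := hd.2.1 x y
  rw [abs_sub_le_iff]
  constructor <;> linarith

theorem cont_aux {Y : Type*} [PseudoMetricSpace Y] (f : G → Y)
    (h : ∀ x y : G, dist (f x) (f y) ≤ d x y) : Continuous f := by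
  rw [continuous_iff_continuousAt]
  intro x
  rw [ContinuousAt, Metric.tendsto_nhds]
  intro ε hε
  rw [Filter.eventually_iff, hd.2.2.2.1 x]
  refine ⟨ε, hε, fun y hy => ?_⟩
  show dist (f y) (f x) < ε
  calc dist (f y) (f x) ≤ d y x := h y x
    _ = d x y := hd.2.1 y x
    _ < ε := hy

theorem conj_small (g : G) {ε : ℝ} (hε : 0 < ε) :
    ∃ δ > (0:ℝ), ∀ h : G, d h 1 < δ → d (g⁻¹ * h * g) 1 < ε := by
  have hψ : Continuous fun h : G => g⁻¹ * h * g := by continuity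
  have hU : {k : G | d 1 k < ε} ∈ nhds (1 : G) :=
    (hd.2.2.2.1 1 _).mpr ⟨ε, hε, fun y hy => hy⟩
  have hV : (fun h : G => g⁻¹ * h * g) ⁻¹' {k : G | d 1 k < ε} ∈ nhds (1 : G) := by
    have hca := hψ.continuousAt (x := (1 : G))
    have h1 : g⁻¹ * 1 * g = 1 := by group
    rw [ContinuousAt, h1] at hca
    exact hca hU
  obtain ⟨δ, hδ, hsub⟩ := (hd.2.2.2.1 1 _).mp hV
  refine ⟨δ, hδ, fun h hh => ?_⟩
  have hmem : h ∈ {y : G | d 1 y < δ} := by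
    show d 1 h < δ
    rw [hd.2.1 1 h]; exact hh
  have := hsub hmem
  rw [hd.2.1]
  exact this

/-- the submodule of right-uniformly continuous bounded continuous functions -/
def S : Submodule ℝ (BoundedContinuousFunction G ℝ) where
  carrier := {ξ | ∀ ε > (0:ℝ), ∃ δ > (0:ℝ), ∀ h x : G, d h 1 < δ → |ξ (x * h) - ξ x| ≤ ε}
  zero_mem' := fun ε hε => ⟨1, one_pos, fun h x _ => by simp [le_of_lt hε]⟩
  add_mem' := by
    intro a b ha hb ε hε
    obtain ⟨δ₁, hδ₁, h₁⟩ := ha (ε/2) (by linarith)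
    obtain ⟨δ₂, hδ₂, h₂⟩ := hb (ε/2) (by linarith)
    refine ⟨min δ₁ δ₂, lt_min hδ₁ hδ₂, fun h x hh => ?_⟩
    have e1 := h₁ h x (lt_of_lt_of_le hh (min_le_left _ _))
    have e2 := h₂ h x (lt_of_lt_of_le hh (min_le_right _ _))
    have key : ((a + b : BoundedContinuousFunction G ℝ)) (x*h) - (a+b) x
        = (a (x*h) - a x) + (b (x*h) - b x) := by
      simp; ring
    rw [key]
    calc |(a (x*h) - a x) + (b (x*h) - b x)| ≤ |a (x*h) - a x| + |b (x*h) - b x| := abs_add_le _ _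
      _ ≤ ε/2 + ε/2 := add_le_add e1 e2
      _ = ε := by ring
  smul_mem' := by
    intro c a ha ε hε
    obtain ⟨δ, hδ, h₁⟩ := ha (ε / (|c| + 1)) (by positivity)
    refine ⟨δ, hδ, fun h x hh => ?_⟩
    have e1 := h₁ h x hh
    have key : ((c • a : BoundedContinuousFunction G ℝ)) (x*h) - (c • a) x
        = c * (a (x*h) - a x) := by
      simp; ring
    rw [key, abs_mul]
    have hc1 : |c| ≤ |c| + 1 := by linarith [abs_nonneg c]
    calc |c| * |a (x*h) - a x| ≤ (|c| + 1) * (ε / (|c| + 1)) :=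
          mul_le_mul hc1 e1 (abs_nonneg _) (by positivity)
      _ = ε := by field_simp

omit hd [IsTopologicalGroup G] in
theorem mem_S_iff (ξ : BoundedContinuousFunction G ℝ) :
    ξ ∈ S d ↔ ∀ ε > (0:ℝ), ∃ δ > (0:ℝ), ∀ h x : G, d h 1 < δ → |ξ (x * h) - ξ x| ≤ ε :=
  Iff.rfl

omit hd [IsTopologicalGroup G] in
theorem S_closed : IsClosed ((S d : Set (BoundedContinuousFunction G ℝ))) := by
  apply IsSeqClosed.isClosed
  intro ξn ξ hmem htend
  rw [SetLike.mem_coe, mem_S_iff]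
  intro ε hε
  obtain ⟨N, hN⟩ : ∃ N, dist (ξn N) ξ ≤ ε/3 := by
    obtain ⟨N, hN⟩ := Metric.tendsto_atTop.mp htend (ε/3) (by linarith)
    exact ⟨N, le_of_lt (hN N le_rfl)⟩
  obtain ⟨δ, hδ, h₁⟩ := hmem N (ε/3) (by linarith)
  refine ⟨δ, hδ, fun h x hh => ?_⟩
  have e := h₁ h x hh
  have p1 : |ξ (x*h) - ξn N (x*h)| ≤ ε/3 := by
    have := BoundedContinuousFunction.dist_coe_le_dist (f := ξn N) (g := ξ) (x*h)
    rw [Real.dist_eq] at this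
    rw [abs_sub_comm]
    linarith
  have p2 : |ξn N x - ξ x| ≤ ε/3 := by
    have := BoundedContinuousFunction.dist_coe_le_dist (f := ξn N) (g := ξ) x
    rw [Real.dist_eq] at this
    linarith
  have key : ξ (x*h) - ξ x
      = (ξ (x*h) - ξn N (x*h)) + (ξn N (x*h) - ξn N x) + (ξn N x - ξ x) := by ring
  rw [key]
  calc |(ξ (x*h) - ξn N (x*h)) + (ξn N (x*h) - ξn N x) + (ξn N x - ξ x)|
      ≤ |(ξ (x*h) - ξn N (x*h)) + (ξn N (x*h) - ξn N x)| + |ξn N x - ξ x| := abs_add_le _ _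
    _ ≤ |ξ (x*h) - ξn N (x*h)| + |ξn N (x*h) - ξn N x| + |ξn N x - ξ x| := by
        have := abs_add_le (ξ (x*h) - ξn N (x*h)) (ξn N (x*h) - ξn N x)
        linarith
    _ ≤ ε/3 + ε/3 + ε/3 := by linarith
    _ = ε := by ring

/-- right translation as a continuous map -/
def mulRightC (g : G) : C(G, G) := ⟨fun x => x * g, continuous_mul_right g⟩

theorem comp_mem (g : G) (ξ : BoundedContinuousFunction G ℝ) (hξ : ξ ∈ S d) :
    ξ.compContinuous (mulRightC g) ∈ S d := by
  rw [mem_S_iff]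
  intro ε hε
  obtain ⟨δ', hδ', h₁⟩ := hξ ε hε
  obtain ⟨δ, hδ, h₂⟩ := conj_small d hd g hδ'
  refine ⟨δ, hδ, fun h x hh => ?_⟩
  have e1 := h₁ (g⁻¹ * h * g) (x * g) (h₂ h hh)
  have key : x * h * g = x * g * (g⁻¹ * h * g) := by group
  simp only [BoundedContinuousFunction.coe_compContinuous, Function.comp_apply]
  show |ξ ((mulRightC g) (x * h)) - ξ ((mulRightC g) x)| ≤ ε
  show |ξ (x * h * g) - ξ (x * g)| ≤ ε
  rw [key]
  exact e1

noncomputable def piFun (g : G) (ξ : ↥(S d)) : ↥(S d) :=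
  ⟨ξ.1.compContinuous (mulRightC g), comp_mem d hd g ξ.1 ξ.2⟩

theorem piFun_apply (g : G) (ξ : ↥(S d)) (x : G) : (piFun d hd g ξ).1 x = ξ.1 (x * g) := rfl

theorem piFun_inv (g : G) (ξ : ↥(S d)) : piFun d hd g⁻¹ (piFun d hd g ξ) = ξ := by
  apply Subtype.ext
  ext x
  show ξ.1 (x * g⁻¹ * g) = ξ.1 x
  rw [mul_assoc, inv_mul_cancel, mul_one]

theorem norm_piFun (g : G) (ξ : ↥(S d)) : ‖piFun d hd g ξ‖ = ‖ξ‖ := by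
  show ‖ξ.1.compContinuous (mulRightC g)‖ = ‖ξ.1‖
  apply le_antisymm
  · exact BoundedContinuousFunction.norm_compContinuous_le ξ.1 (mulRightC g)
  · have key : ξ.1 = (ξ.1.compContinuous (mulRightC g)).compContinuous (mulRightC g⁻¹) := by
      ext x
      show ξ.1 x = ξ.1 (x * g⁻¹ * g)
      rw [mul_assoc, inv_mul_cancel, mul_one]
    calc ‖ξ.1‖ = ‖(ξ.1.compContinuous (mulRightC g)).compContinuous (mulRightC g⁻¹)‖ := by
          rw [← key]
      _ ≤ ‖ξ.1.compContinuous (mulRightC g)‖ :=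
          BoundedContinuousFunction.norm_compContinuous_le _ _

noncomputable def piIso (g : G) : ↥(S d) ≃ₗᵢ[ℝ] ↥(S d) where
  toFun := piFun d hd g
  invFun := piFun d hd g⁻¹
  left_inv := piFun_inv d hd g
  right_inv := fun ξ => by
    have := piFun_inv d hd g⁻¹ ξ
    rwa [inv_inv] at this
  map_add' := by
    intro a b
    apply Subtype.ext
    ext x
    show (a.1 + b.1) (x * g) = (piFun d hd g a).1 x + (piFun d hd g b).1 x
    rw [piFun_apply, piFun_apply]
    simp
  map_smul' := by
    intro c a
    apply Subtype.ext
    ext x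
    show (c • a.1) (x * g) = (c • (piFun d hd g a)).1 x
    have : (c • (piFun d hd g a)).1 x = c • ((piFun d hd g a).1 x) := rfl
    rw [this, piFun_apply]
    simp
  norm_map' := norm_piFun d hd g

theorem piIso_apply (g : G) (ξ : ↥(S d)) : piIso d hd g ξ = piFun d hd g ξ := rfl

theorem rho_cont : Continuous fun x : G => d x 1 := by
  apply cont_aux d hd
  intro x y
  rw [Real.dist_eq]
  exact abs_sub_le_d d hd x y 1

noncomputable def bFun (g : G) : BoundedContinuousFunction G ℝ :=
  BoundedContinuousFunction.ofNormedAddCommGroup (fun x => d (x * g) 1 - d x 1)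
    (((rho_cont d hd).comp (continuous_mul_right g)).sub (rho_cont d hd)) (d g 1)
    (fun x => by
      show ‖d (x * g) 1 - d x 1‖ ≤ d g 1
      rw [Real.norm_eq_abs]
      have h1 : d (x*g) x = d g 1 := by
        have := hd.2.2.2.2 x g 1
        rwa [mul_one] at this
      have h2 := abs_sub_le_d d hd (x*g) x 1
      rwa [h1] at h2)

theorem bFun_apply (g x : G) : bFun d hd g x = d (x * g) 1 - d x 1 := rfl

theorem bFun_mem (g : G) : bFun d hd g ∈ S d := by
  rw [mem_S_iff]
  intro ε hε
  obtain ⟨δ₁, hδ₁, h₁⟩ := conj_small d hd g (show (0:ℝ) < ε/2 by linarith)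
  refine ⟨min δ₁ (ε/2), lt_min hδ₁ (by linarith), fun h x hh => ?_⟩
  have hc := h₁ h (lt_of_lt_of_le hh (min_le_left _ _))
  have hh2 : d h 1 < ε/2 := lt_of_lt_of_le hh (min_le_right _ _)
  rw [bFun_apply, bFun_apply]
  have e1 : |d (x*h*g) 1 - d (x*g) 1| ≤ d (g⁻¹*h*g) 1 := by
    have h2 : d (x*h*g) (x*g) = d (g⁻¹*h*g) 1 := by
      have h3 := hd.2.2.2.2 (x*g) (g⁻¹*h*g) 1
      rw [mul_one] at h3
      rw [← h3]
      congr 1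
      group
    have h4 := abs_sub_le_d d hd (x*h*g) (x*g) 1
    rwa [h2] at h4
  have e2 : |d x 1 - d (x*h) 1| ≤ d h 1 := by
    have h2 : d x (x*h) = d h 1 := by
      rw [hd.2.1]
      have := hd.2.2.2.2 x h 1
      rwa [mul_one] at this
    have h4 := abs_sub_le_d d hd x (x*h) 1
    rwa [h2] at h4
  have key : d (x*h*g) 1 - d (x*h) 1 - (d (x*g) 1 - d x 1)
      = (d (x*h*g) 1 - d (x*g) 1) + (d x 1 - d (x*h) 1) := by ring
  rw [key]
  calc |(d (x*h*g) 1 - d (x*g) 1) + (d x 1 - d (x*h) 1)|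
      ≤ |d (x*h*g) 1 - d (x*g) 1| + |d x 1 - d (x*h) 1| := abs_add_le _ _
    _ ≤ d (g⁻¹*h*g) 1 + d h 1 := add_le_add e1 e2
    _ ≤ ε/2 + ε/2 := add_le_add (le_of_lt hc) (le_of_lt hh2)
    _ = ε := by ring

noncomputable def bX (g : G) : ↥(S d) := ⟨bFun d hd g, bFun_mem d hd g⟩

end ArensEellsAux

universe u

theorem arens_eells_action {G : Type u} [Group G] [TopologicalSpace G]
    [IsTopologicalGroup G] (d : G → G → ℝ) (hd : IsCompatibleLeftInvariantMetric G d) :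
    ∃ (X : Type u) (_ : NormedAddCommGroup X) (_ : NormedSpace ℝ X) (_ : CompleteSpace X)
      (π : G → X ≃ₗᵢ[ℝ] X) (b : G → X),
      (∀ (g f : G) (ξ : X), π (g * f) ξ = π g (π f ξ)) ∧
      (∀ ξ : X, Continuous fun g : G => π g ξ) ∧
      Continuous b ∧
      (∀ g f : G, b (g * f) = π g (b f) + b g) ∧
      (∀ g : G, ‖b g‖ = d g 1) ∧
      (MetricallyProperMetric G d →
        ∀ B : Set X, (∃ R : ℝ, ∀ ξ ∈ B, ‖ξ‖ ≤ R) →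
          ∃ C : ℝ, ∀ g ∈ b ⁻¹' B, ∀ h ∈ b ⁻¹' B, d g h ≤ C) := by
  have hd' : ArensEellsAux.Hyp d := ⟨hd.1.1, hd.1.2.1, hd.1.2.2, hd.2.1, hd.2.2⟩
  haveI : CompleteSpace ↥(ArensEellsAux.S (G := G) d) :=
    (ArensEellsAux.S_closed d).completeSpace_coe
  have hnorm : ∀ g : G, ‖ArensEellsAux.bX d hd' g‖ = d g 1 := by
    intro g
    show ‖ArensEellsAux.bFun d hd' g‖ = d g 1
    apply le_antisymm
    · rw [BoundedContinuousFunction.norm_le (ArensEellsAux.d_nonneg d hd' g 1)]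
      intro x
      show ‖d (x * g) 1 - d x 1‖ ≤ d g 1
      rw [Real.norm_eq_abs]
      have h1 := hd.2.2 x g 1
      rw [mul_one] at h1
      have h2 := ArensEellsAux.abs_sub_le_d d hd' (x * g) x 1
      rwa [h1] at h2
    · have h3 := (ArensEellsAux.bFun d hd' g).norm_coe_le_norm 1
      have h4 : ArensEellsAux.bFun d hd' g 1 = d g 1 := by
        show d (1 * g) 1 - d 1 1 = d g 1
        rw [one_mul, (hd.1.1 1 1).mpr rfl, sub_zero]
      rwa [h4, Real.norm_eq_abs, abs_of_nonneg (ArensEellsAux.d_nonneg d hd' g 1)] at h3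
  have hhom : ∀ (g f : G) (ξ : ↥(ArensEellsAux.S (G := G) d)),
      ArensEellsAux.piIso d hd' (g * f) ξ = ArensEellsAux.piIso d hd' g
        (ArensEellsAux.piIso d hd' f ξ) := by
    intro g f ξ
    apply Subtype.ext
    ext x
    show ξ.1 (x * (g * f)) = ξ.1 (x * g * f)
    rw [mul_assoc]
  have hstrong : ∀ ξ : ↥(ArensEellsAux.S (G := G) d),
      Continuous fun g : G => ArensEellsAux.piIso d hd' g ξ := by
    intro ξ
    rw [continuous_iff_continuousAt]
    intro g₀
    rw [ContinuousAt, Metric.tendsto_nhds]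
    intro ε hε
    obtain ⟨δ, hδ, h₁⟩ := ξ.2 (ε / 2) (by linarith)
    rw [Filter.eventually_iff, hd.2.1 g₀]
    refine ⟨δ, hδ, fun g hg => ?_⟩
    show dist (ArensEellsAux.piIso d hd' g ξ) (ArensEellsAux.piIso d hd' g₀ ξ) < ε
    have hg' : d (g₀⁻¹ * g) 1 < δ := by
      have e := hd.2.2 g₀ (g₀⁻¹ * g) 1
      rw [mul_one, mul_inv_cancel_left] at e
      rw [← e, hd.1.2.1]
      exact hg
    have key : dist (ArensEellsAux.piIso d hd' g ξ) (ArensEellsAux.piIso d hd' g₀ ξ) ≤ ε / 2 := by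
      have e0 : dist (ArensEellsAux.piIso d hd' g ξ) (ArensEellsAux.piIso d hd' g₀ ξ)
          = dist (ξ.1.compContinuous (ArensEellsAux.mulRightC g))
              (ξ.1.compContinuous (ArensEellsAux.mulRightC g₀)) := rfl
      rw [e0, BoundedContinuousFunction.dist_le (by linarith)]
      intro x
      show dist (ξ.1 (x * g)) (ξ.1 (x * g₀)) ≤ ε / 2
      rw [Real.dist_eq]
      have e2 := h₁ (g₀⁻¹ * g) (x * g₀) hg'
      have e3 : x * g₀ * (g₀⁻¹ * g) = x * g := by group
      rwa [e3] at e2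
    linarith
  have hcontb : Continuous (ArensEellsAux.bX d hd') := by
    apply ArensEellsAux.cont_aux d hd'
    intro x y
    show dist (ArensEellsAux.bFun d hd' x) (ArensEellsAux.bFun d hd' y) ≤ d x y
    rw [BoundedContinuousFunction.dist_le (ArensEellsAux.d_nonneg d hd' x y)]
    intro z
    show dist (d (z * x) 1 - d z 1) (d (z * y) 1 - d z 1) ≤ d x y
    rw [Real.dist_eq]
    have e1 : d (z * x) 1 - d z 1 - (d (z * y) 1 - d z 1) = d (z * x) 1 - d (z * y) 1 := by ring
    rw [e1]
    have e2 := ArensEellsAux.abs_sub_le_d d hd' (z * x) (z * y) 1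
    rwa [hd.2.2 z x y] at e2
  have hcoc : ∀ g f : G, ArensEellsAux.bX d hd' (g * f)
      = ArensEellsAux.piIso d hd' g (ArensEellsAux.bX d hd' f) + ArensEellsAux.bX d hd' g := by
    intro g f
    apply Subtype.ext
    ext x
    show d (x * (g * f)) 1 - d x 1
        = (d (x * g * f) 1 - d (x * g) 1) + (d (x * g) 1 - d x 1)
    rw [← mul_assoc]
    ring
  refine ⟨↥(ArensEellsAux.S (G := G) d), inferInstance, inferInstance, inferInstance,
    ArensEellsAux.piIso d hd', ArensEellsAux.bX d hd', hhom, hstrong, hcontb, hcoc, hnorm, ?_⟩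
  rintro - B ⟨R, hR⟩
  refine ⟨R + R, fun g hg h hh => ?_⟩
  have h1 : d g 1 ≤ R := by rw [← hnorm g]; exact hR _ hg
  have h2 : d h 1 ≤ R := by rw [← hnorm h]; exact hR _ hh
  have h3 := hd.1.2.2 g 1 h
  have h4 : d 1 h = d h 1 := hd.1.2.1 1 h
  linarith
end
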